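/- arXiv:1205.6786 — 5 statements merged into one kernel-verified Lean document; each statement's English description precedes it below -/
import Mathlib

section
/- Assume there exists at least one function admissible for Λ (equivalently, mod_p(F) < ∞). Then there exists an extremal function for the p-modulus mod_p(F) if and only if for every measurable subfamily S ⊆ Λ with mod_p(S) = 0 one has μ(π⁻¹(S)) = 0. -/
open MeasureTheory ENNReal

/-- `f` is admissible for the subfamily `S ⊆ Λ` of leaves: `f` is a nonnegative measurable
function in `L^p(μ)` whose integral over the leaf `ν l` is at least `1` for
`π_*μ`-almost every `l ∈ S`. -/
def IsAdmissible {X Λ : Type*} [MeasurableSpace X] [MeasurableSpace Λ]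
    (μ : MeasureTheory.Measure X) (ν : Λ → MeasureTheory.Measure X) (π : X → Λ) (p : ℝ)
    (S : Set Λ) (f : X → ℝ) : Prop :=
  Measurable f ∧ (∀ x, 0 ≤ f x) ∧ MemLp f (ENNReal.ofReal p) μ ∧
    ∀ᵐ l ∂(μ.map π), l ∈ S → 1 ≤ ∫⁻ x, ENNReal.ofReal (f x) ∂(ν l)

/-- The `p`-modulus of the subfamily `S ⊆ Λ` of leaves: the infimum of the `L^p(μ)`-norms
of functions admissible for `S` (equal to `∞` when no admissible function exists). -/
noncomputable def pModulus {X Λ : Type*} [MeasurableSpace X] [MeasurableSpace Λ]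
    (μ : MeasureTheory.Measure X) (ν : Λ → MeasureTheory.Measure X) (π : X → Λ) (p : ℝ)
    (S : Set Λ) : ℝ≥0∞ :=
  ⨅ (f : X → ℝ) (_ : IsAdmissible μ ν π p S f), eLpNorm f (ENNReal.ofReal p) μ

/-- `f₀` is an extremal function for the `p`-modulus of the foliation (the whole family `Λ`):
it is admissible for `Λ` and its `L^p(μ)`-norm realizes `mod_p(F)`. -/
def IsExtremal {X Λ : Type*} [MeasurableSpace X] [MeasurableSpace Λ]
    (μ : MeasureTheory.Measure X) (ν : Λ → MeasureTheory.Measure X) (π : X → Λ) (p : ℝ)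
    (f₀ : X → ℝ) : Prop :=
  IsAdmissible μ ν π p Set.univ f₀ ∧
    eLpNorm f₀ (ENNReal.ofReal p) μ = pModulus μ ν π p Set.univ



section AuxProofs

open Filter


private lemma ennreal_iSup_rpow {p : ℝ} (hp0 : 0 < p) (u : ℕ → ℝ≥0∞) :
    (⨆ n, u n) ^ p = ⨆ n, u n ^ p := by
  apply le_antisymm
  · have h : (⨆ n, u n) ≤ (⨆ n, u n ^ p) ^ (1/p) := by
      refine iSup_le fun n => ?_
      have h1 : u n = (u n ^ p) ^ (1/p) := by
        rw [← ENNReal.rpow_mul, mul_one_div, div_self hp0.ne', ENNReal.rpow_one]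
      rw [h1]
      exact ENNReal.rpow_le_rpow (le_iSup (fun n => u n ^ p) n) (by positivity)
    calc (⨆ n, u n) ^ p ≤ ((⨆ n, u n ^ p) ^ (1/p)) ^ p := ENNReal.rpow_le_rpow h hp0.le
    _ = ⨆ n, u n ^ p := by
        rw [← ENNReal.rpow_mul, one_div, inv_mul_cancel₀ hp0.ne', ENNReal.rpow_one]
  · exact iSup_le fun n => ENNReal.rpow_le_rpow (le_iSup u n) hp0.le

private lemma key_real {p : ℝ} (hp : 1 < p) {θ : ℝ} (hθ0 : 0 < θ) (hθ1 : θ ≤ 1) :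
    ∃ c : ℝ, 0 < c ∧ ∀ a b : ℝ, 0 ≤ a → 0 ≤ b →
      |a - b| ^ p + c⁻¹ * (((a + b) / 2) ^ p)
        ≤ c⁻¹ * ((a ^ p + b ^ p) / 2) + θ ^ p * 2 ^ p * ((a ^ p + b ^ p) / 2) := by
  have hp0 : (0:ℝ) < p := lt_trans one_pos hp
  set ψ : ℝ → ℝ := fun t => (((1 + t)/2) ^ p + ((1 - t)/2) ^ p)/2 - (1/2 : ℝ) ^ p with hψ
  have hcont : ContinuousOn ψ (Set.Icc θ 1) := by
    apply Continuous.continuousOn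
    apply Continuous.sub ?_ continuous_const
    apply Continuous.div_const
    exact ((Real.continuous_rpow_const hp0.le).comp (by continuity)).add
      ((Real.continuous_rpow_const hp0.le).comp (by continuity))
  obtain ⟨t₀, ht₀, hmin⟩ := isCompact_Icc.exists_isMinOn (Set.nonempty_Icc.mpr hθ1) hcont
  have hψpos : ∀ t ∈ Set.Icc θ 1, 0 < ψ t := by
    intro t ht
    have hx : (0:ℝ) ≤ (1 + t)/2 := by have := ht.1; nlinarith
    have hy : (0:ℝ) ≤ (1 - t)/2 := by have := ht.2; linarith
    have hxy : (1 + t)/2 ≠ (1 - t)/2 := by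
      intro h; have ht' : t = 0 := by linarith
      have := ht.1; nlinarith
    have h := (strictConvexOn_rpow hp).2 (Set.mem_Ici.mpr hx) (Set.mem_Ici.mpr hy) hxy
      one_half_pos one_half_pos (by norm_num)
    simp only [smul_eq_mul] at h
    have harg : (1/2:ℝ) * ((1+t)/2) + (1/2) * ((1-t)/2) = 1/2 := by ring
    rw [harg] at h
    have h12 : ((1:ℝ)/2) ^ p = (1/2:ℝ) ^ p := rfl
    simp only [hψ]
    nlinarith [h]
  have hc : 0 < ψ t₀ := hψpos t₀ ht₀
  refine ⟨ψ t₀, hc, ?_⟩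
  intro a b ha hb
  have hs : 0 ≤ a + b := add_nonneg ha hb
  -- convexity: midpoint inequality
  have hconv : ∀ u v : ℝ, 0 ≤ u → 0 ≤ v → ((u + v)/2) ^ p ≤ (u ^ p + v ^ p)/2 := by
    intro u v hu hv
    have h := (strictConvexOn_rpow hp).convexOn.2 (Set.mem_Ici.mpr hu) (Set.mem_Ici.mpr hv)
      (by norm_num : (0:ℝ) ≤ 1/2) (by norm_num : (0:ℝ) ≤ 1/2) (by norm_num)
    simp only [smul_eq_mul] at h
    calc ((u + v)/2) ^ p = (1/2 * u + 1/2 * v) ^ p := by ring_nf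
    _ ≤ 1/2 * u ^ p + 1/2 * v ^ p := h
    _ = (u ^ p + v ^ p)/2 := by ring
  have hJ : ((a + b)/2) ^ p ≤ (a ^ p + b ^ p)/2 := hconv a b ha hb
  have hplus : (a + b) ^ p ≤ 2 ^ p * ((a ^ p + b ^ p)/2) := by
    calc (a + b) ^ p = (2 * ((a + b)/2)) ^ p := by ring_nf
    _ = 2 ^ p * ((a + b)/2) ^ p := Real.mul_rpow (by norm_num) (by linarith)
    _ ≤ 2 ^ p * ((a ^ p + b ^ p)/2) :=
        mul_le_mul_of_nonneg_left hJ (Real.rpow_nonneg (by norm_num) p)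
  have hcinv : (0:ℝ) ≤ (ψ t₀)⁻¹ := inv_nonneg.mpr hc.le
  have habs_le : |a - b| ≤ a + b := abs_le.mpr ⟨by linarith, by linarith⟩
  by_cases hcase : |a - b| ≤ θ * (a + b)
  · have h1 : |a - b| ^ p ≤ θ ^ p * (a + b) ^ p := by
      calc |a - b| ^ p ≤ (θ * (a + b)) ^ p :=
        Real.rpow_le_rpow (abs_nonneg _) hcase hp0.le
      _ = θ ^ p * (a + b) ^ p := Real.mul_rpow hθ0.le hs
    have h2 : θ ^ p * (a + b) ^ p ≤ θ ^ p * 2 ^ p * ((a ^ p + b ^ p)/2) := by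
      rw [mul_assoc]
      exact mul_le_mul_of_nonneg_left hplus (Real.rpow_nonneg hθ0.le p)
    have h3 : (ψ t₀)⁻¹ * ((a + b)/2) ^ p ≤ (ψ t₀)⁻¹ * ((a ^ p + b ^ p)/2) :=
      mul_le_mul_of_nonneg_left hJ hcinv
    linarith
  · push_neg at hcase
    have hs0 : 0 < a + b := by
      rcases hs.lt_or_eq with h | h
      · exact h
      · exfalso
        have ha0 : a = 0 := by linarith
        have hb0 : b = 0 := by linarith
        rw [ha0, hb0] at hcase
        norm_num at hcase
    set s := a + b with hsdef
    set t := |a - b| / s with htdef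
    have htmem : t ∈ Set.Icc θ 1 :=
      ⟨(le_div_iff₀ hs0).mpr (by linarith), (div_le_one hs0).mpr habs_le⟩
    have hψt : ψ t₀ ≤ ψ t := hmin htmem
    -- identity : (a^p + b^p)/2 - ((a+b)/2)^p = s^p * ψ t
    have hid : (a ^ p + b ^ p)/2 - ((a + b)/2) ^ p = s ^ p * ψ t := by
      have hsp : s ^ p ≠ 0 := (Real.rpow_pos_of_pos hs0 p).ne'
      have hmain : ∀ u v : ℝ, 0 ≤ v → v ≤ u → u + v = s →
          (u ^ p + v ^ p)/2 - ((u + v)/2) ^ p = s ^ p * ψ (|u - v| / s) := by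
        intro u v hv hvu huv
        have hu : 0 ≤ u := le_trans hv hvu
        have habs : |u - v| = u - v := abs_of_nonneg (by linarith)
        have hx : (1 + |u - v| / s)/2 = u / s := by
          rw [habs, div_eq_div_iff (by norm_num) hs0.ne', add_mul, div_mul_cancel₀ _ hs0.ne']
          linarith
        have hy : (1 - |u - v| / s)/2 = v / s := by
          rw [habs, div_eq_div_iff (by norm_num) hs0.ne', sub_mul, div_mul_cancel₀ _ hs0.ne']
          linarith
        have hus : (u / s) ^ p = u ^ p / s ^ p := Real.div_rpow hu hs0.le p
        have hvs : (v / s) ^ p = v ^ p / s ^ p := Real.div_rpow hv hs0.le p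
        have hmid : ((u + v)/2) ^ p = s ^ p * (1/2 : ℝ) ^ p := by
          rw [huv]
          calc (s/2) ^ p = (s * (1/2)) ^ p := by ring_nf
          _ = s ^ p * (1/2 : ℝ) ^ p := Real.mul_rpow hs0.le (by norm_num)
        simp only [hψ, hx, hy, hus, hvs]
        rw [hmid]
        field_simp
      rcases le_total b a with hba | hab
      · exact hmain a b hb hba rfl
      · have := hmain b a ha hab (by rw [hsdef]; ring)
        have habs : |b - a| = |a - b| := abs_sub_comm b a
        rw [habs] at this
        calc (a ^ p + b ^ p)/2 - ((a + b)/2) ^ p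
            = (b ^ p + a ^ p)/2 - ((b + a)/2) ^ p := by ring_nf
        _ = s ^ p * ψ (|a - b| / s) := this
        _ = s ^ p * ψ t := by rw [htdef]
    have hsppos : 0 < s ^ p := Real.rpow_pos_of_pos hs0 p
    have h3 : s ^ p ≤ (ψ t₀)⁻¹ * ((a ^ p + b ^ p)/2 - ((a + b)/2) ^ p) := by
      rw [hid]
      calc s ^ p = (ψ t₀)⁻¹ * (s ^ p * ψ t₀) := by field_simp
      _ ≤ (ψ t₀)⁻¹ * (s ^ p * ψ t) :=
          mul_le_mul_of_nonneg_left (mul_le_mul_of_nonneg_left hψt hsppos.le) hcinv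
    have h4 : |a - b| ^ p ≤ s ^ p := Real.rpow_le_rpow (abs_nonneg _) habs_le hp0.le
    have h5 : 0 ≤ θ ^ p * 2 ^ p * ((a ^ p + b ^ p)/2) := by
      apply mul_nonneg (mul_nonneg (Real.rpow_nonneg hθ0.le p) (Real.rpow_nonneg (by norm_num) p))
      have := Real.rpow_nonneg ha p
      have := Real.rpow_nonneg hb p
      linarith
    nlinarith [mul_sub ((ψ t₀)⁻¹) ((a ^ p + b ^ p)/2) (((a + b)/2) ^ p)]

end AuxProofs

section ForwardDir

open Filter

variable {X Λ : Type*} [MeasurableSpace X] [MeasurableSpace Λ]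

private lemma eLp_formula {μ : Measure X} {p : ℝ} (hp0 : 0 < p) (f : X → ℝ) :
    eLpNorm f (ENNReal.ofReal p) μ = (∫⁻ x, ENNReal.ofReal |f x| ^ p ∂μ) ^ (1/p) := by
  rw [eLpNorm_eq_lintegral_rpow_enorm_toReal
    (by simp only [ne_eq, ENNReal.ofReal_eq_zero, not_le]; linarith) ENNReal.ofReal_ne_top]
  simp_rw [Real.enorm_eq_ofReal_abs, ENNReal.toReal_ofReal hp0.le]

private lemma rpow_cancel {p : ℝ} (hp0 : 0 < p) (x : ℝ≥0∞) : (x ^ (1/p)) ^ p = x := by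
  rw [← ENNReal.rpow_mul, one_div, inv_mul_cancel₀ hp0.ne', ENNReal.rpow_one]

private lemma rpow_cancel' {p : ℝ} (hp0 : 0 < p) (x : ℝ≥0∞) : (x ^ p) ^ (1/p) = x := by
  rw [← ENNReal.rpow_mul, mul_one_div, div_self hp0.ne', ENNReal.rpow_one]

private lemma exists_adm_lt {μ : Measure X} {ν : Λ → Measure X} {π : X → Λ} {p : ℝ}
    {S : Set Λ} {t : ℝ≥0∞} (h : pModulus μ ν π p S < t) :
    ∃ g, IsAdmissible μ ν π p S g ∧ eLpNorm g (ENNReal.ofReal p) μ < t := by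
  rw [pModulus, iInf_lt_iff] at h
  obtain ⟨g, hg⟩ := h
  rw [iInf_lt_iff] at hg
  obtain ⟨h1, h2⟩ := hg
  exact ⟨g, h1, h2⟩

private lemma forward_dir (μ : Measure X) (ν : Λ → Measure X) (π : X → Λ) (hπ : Measurable π)
    (hK : ∀ l : Λ, ν l {x | π x ≠ l} = 0)
    (hH : ∀ N : Set X, MeasurableSet N → μ N = 0 → ∀ᵐ l ∂(μ.map π), ν l N = 0)
    (p : ℝ) (hp : 1 < p) (f₀ : X → ℝ) (hf₀ : IsExtremal μ ν π p f₀)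
    (S : Set Λ) (hS : MeasurableSet S) (h0 : pModulus μ ν π p S = 0) :
    μ (π ⁻¹' S) = 0 := by
  classical
  have hp0 : (0:ℝ) < p := lt_trans one_pos hp
  obtain ⟨hadm0, hext⟩ := hf₀
  obtain ⟨hmeas, hpos, hmem, hae⟩ := hadm0
  set q := ENNReal.ofReal p with hq
  have hq1 : (1:ℝ≥0∞) ≤ q := by
    rw [hq, ← ENNReal.ofReal_one]; exact ENNReal.ofReal_le_ofReal hp.le
  set m := eLpNorm f₀ q μ with hmdef
  have hmfin : m ≠ ∞ := hmem.2.ne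
  set A := π ⁻¹' S with hA
  have hAmeas : MeasurableSet A := hπ hS
  set F : X → ℝ≥0∞ := fun x => ENNReal.ofReal |f₀ x| ^ p with hF
  have hFmeas : Measurable F := (hmeas.abs.ennreal_ofReal).pow_const p
  have hJ : (∫⁻ x, F x ∂μ) = m ^ p := by
    rw [hmdef, eLp_formula hp0, rpow_cancel hp0]
  have hJfin : (∫⁻ x, F x ∂μ) ≠ ∞ := by
    rw [hJ]; exact ENNReal.rpow_ne_top_of_nonneg hp0.le hmfin
  -- Step 1 : the p-energy of f₀ over A vanishes
  have hκ : ∫⁻ x in A, F x ∂μ = 0 := by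
    by_contra hκ0
    set u : X → ℝ := fun x => if π x ∈ S then 0 else f₀ x with hu
    have humeas : Measurable u := Measurable.ite (hπ hS) measurable_const hmeas
    have hupos : ∀ x, 0 ≤ u x := by
      intro x; by_cases hx : π x ∈ S <;> simp [hu, hx, hpos x]
    have hule : ∀ x, |u x| ≤ |f₀ x| := by
      intro x; by_cases hx : π x ∈ S <;> simp [hu, hx, abs_nonneg]
    have humem : MemLp u q μ :=
      MemLp.of_le hmem humeas.aestronglyMeasurable
        (Eventually.of_forall fun x => by simpa [Real.norm_eq_abs] using hule x)
    have huI : (∫⁻ x, ENNReal.ofReal |u x| ^ p ∂μ) + ∫⁻ x in A, F x ∂μ = ∫⁻ x, F x ∂μ := by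
      have h1 : (∫⁻ x, ENNReal.ofReal |u x| ^ p ∂μ) = ∫⁻ x in Aᶜ, F x ∂μ := by
        rw [← lintegral_indicator hAmeas.compl]
        congr 1; funext x
        by_cases hx : x ∈ A
        · have hxS : π x ∈ S := hx
          simp [Set.indicator, hx, hu, hxS, Real.zero_rpow hp0.ne', hp0]
        · have hxS : π x ∉ S := hx
          simp [Set.indicator, hx, hu, hxS, hF]
      rw [h1, add_comm, lintegral_add_compl F hAmeas]
    have hlt : (∫⁻ x, ENNReal.ofReal |u x| ^ p ∂μ) < ∫⁻ x, F x ∂μ := by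
      rw [← huI]
      refine ENNReal.lt_add_right ?_ hκ0
      intro hcon
      rw [← huI, hcon] at hJfin
      simp at hJfin
    have hult : eLpNorm u q μ < m := by
      rw [eLp_formula hp0, hmdef, eLp_formula hp0]
      exact ENNReal.rpow_lt_rpow hlt (by positivity)
    have hgap : 0 < m - eLpNorm u q μ := tsub_pos_iff_lt.mpr hult
    obtain ⟨g, hgadm, hglt⟩ := exists_adm_lt (show pModulus μ ν π p S < m - eLpNorm u q μ by
      rw [h0]; exact hgap)
    set f' : X → ℝ := fun x => u x + g x with hf'
    have hf'adm : IsAdmissible μ ν π p Set.univ f' := by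
      refine ⟨humeas.add hgadm.1, fun x => add_nonneg (hupos x) (hgadm.2.1 x),
        humem.add hgadm.2.2.1, ?_⟩
      filter_upwards [hae, hgadm.2.2.2] with l h1 h2 _
      by_cases hlS : l ∈ S
      · calc (1:ℝ≥0∞) ≤ ∫⁻ x, ENNReal.ofReal (g x) ∂(ν l) := h2 hlS
        _ ≤ ∫⁻ x, ENNReal.ofReal (f' x) ∂(ν l) :=
            lintegral_mono fun x => ENNReal.ofReal_le_ofReal
              (le_add_of_nonneg_left (hupos x))
      · have hnull : ν l A = 0 := by
          refine measure_mono_null ?_ (hK l)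
          intro x hx hne
          exact hlS (hne ▸ hx)
        have hael : ∀ᵐ x ∂(ν l), x ∉ A := measure_eq_zero_iff_ae_notMem.mp hnull
        refine le_trans (h1 (Set.mem_univ l)) (lintegral_mono_ae ?_)
        filter_upwards [hael] with x hx
        have hxS : π x ∉ S := hx
        apply ENNReal.ofReal_le_ofReal
        show f₀ x ≤ u x + g x
        have hux : u x = f₀ x := if_neg hxS
        rw [hux]
        linarith [hgadm.2.1 x]
    have hge : m ≤ eLpNorm f' q μ := by
      calc m = pModulus μ ν π p Set.univ := hext
      _ ≤ eLpNorm f' q μ := iInf₂_le f' hf'adm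
    have hlt' : eLpNorm f' q μ < m := by
      calc eLpNorm f' q μ ≤ eLpNorm u q μ + eLpNorm g q μ :=
        eLpNorm_add_le humeas.aestronglyMeasurable hgadm.1.aestronglyMeasurable hq1
      _ < eLpNorm u q μ + (m - eLpNorm u q μ) :=
          ENNReal.add_lt_add_left (hult.trans (lt_top_iff_ne_top.mpr hmfin)).ne hglt
      _ = m := add_tsub_cancel_of_le hult.le
    exact absurd hge (not_le.mpr hlt')
  -- Step 2 : f₀ vanishes a.e. on A, hence a.e. leaf in S has zero integral
  have hNnull : μ (A ∩ {x | f₀ x ≠ 0}) = 0 := by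
    have h1 : F =ᵐ[μ.restrict A] 0 := by
      rw [← lintegral_eq_zero_iff hFmeas]; exact hκ
    have h2 : ∀ᵐ x ∂μ, x ∈ A → F x = 0 := (ae_restrict_iff' hAmeas).mp h1
    rw [ae_iff] at h2
    refine measure_mono_null ?_ h2
    intro x hx
    simp only [Set.mem_setOf_eq, Classical.not_imp]
    refine ⟨hx.1, fun hcon => ?_⟩
    have hof : ENNReal.ofReal |f₀ x| = 0 := by
      rcases ENNReal.rpow_eq_zero_iff.mp hcon with ⟨h,_⟩|⟨h,_⟩
      · exact h
      · exact absurd h ENNReal.ofReal_ne_top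
    rw [ENNReal.ofReal_eq_zero] at hof
    exact hx.2 (abs_eq_zero.mp (le_antisymm hof (abs_nonneg _)))
  set N := A ∩ {x | f₀ x ≠ 0} with hN
  have hNmeas : MeasurableSet N :=
    hAmeas.inter ((hmeas (measurableSet_singleton 0)).compl)
  have hHN := hH N hNmeas hNnull
  have hfinal : ∀ᵐ l ∂(μ.map π), l ∉ S := by
    filter_upwards [hHN, hae] with l h1 h2
    intro hlS
    have hae1 : ∀ᵐ x ∂(ν l), x ∉ {x | π x ≠ l} := measure_eq_zero_iff_ae_notMem.mp (hK l)
    have hae2 : ∀ᵐ x ∂(ν l), x ∉ N := measure_eq_zero_iff_ae_notMem.mp h1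
    have hzero : ∫⁻ x, ENNReal.ofReal (f₀ x) ∂(ν l) = 0 := by
      have hz : ∀ᵐ x ∂(ν l), ENNReal.ofReal (f₀ x) = 0 := by
        filter_upwards [hae1, hae2] with x hx1 hx2
        simp only [Set.mem_setOf_eq, not_not] at hx1
        have hxA : x ∈ A := by rw [hA]; simp only [Set.mem_preimage, hx1]; exact hlS
        have hzx : f₀ x = 0 := by by_contra hc; exact hx2 ⟨hxA, hc⟩
        simp [hzx]
      rw [lintegral_congr_ae hz, lintegral_zero]
    have h12 := h2 (Set.mem_univ l)
    rw [hzero] at h12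
    simp at h12
  rw [← Measure.map_apply hπ hS]
  exact measure_eq_zero_iff_ae_notMem.mpr hfinal

end ForwardDir

section BackwardDir

open Filter Topology NNReal

variable {X Λ : Type*} [MeasurableSpace X] [MeasurableSpace Λ]

private lemma backward_dir (μ : Measure X) (ν : Λ → Measure X) (π : X → Λ)
    (hπ : Measurable π) (hν : Measurable ν)
    (hH : ∀ N : Set X, MeasurableSet N → μ N = 0 → ∀ᵐ l ∂(μ.map π), ν l N = 0)
    (p : ℝ) (hp : 1 < p)
    (hadm : ∃ f, IsAdmissible μ ν π p Set.univ f)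
    (hZ : ∀ S : Set Λ, MeasurableSet S → pModulus μ ν π p S = 0 → μ (π ⁻¹' S) = 0) :
    ∃ f₀, IsExtremal μ ν π p f₀ := by
  classical
  have hp0 : (0:ℝ) < p := lt_trans one_pos hp
  set q := ENNReal.ofReal p with hq
  have hq1 : (1:ℝ≥0∞) ≤ q := by
    rw [hq, ← ENNReal.ofReal_one]; exact ENNReal.ofReal_le_ofReal hp.le
  haveI : Fact ((1:ℝ≥0∞) ≤ q) := ⟨hq1⟩
  set m := pModulus μ ν π p Set.univ with hm
  obtain ⟨f₁, hf₁⟩ := hadm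
  have hmfin : m ≠ ∞ := ((iInf₂_le f₁ hf₁).trans_lt hf₁.2.2.1.2).ne
  have hmp_fin : m ^ p ≠ ∞ := ENNReal.rpow_ne_top_of_nonneg hp0.le hmfin
  have hIlb : ∀ g : X → ℝ, IsAdmissible μ ν π p Set.univ g →
      m ^ p ≤ ∫⁻ x, ENNReal.ofReal |g x| ^ p ∂μ := by
    intro g hg
    have h1 : m ≤ eLpNorm g q μ := iInf₂_le g hg
    have h2 := ENNReal.rpow_le_rpow h1 hp0.le
    rwa [eLp_formula hp0, rpow_cancel hp0] at h2
  -- minimizing sequence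
  have hseq : ∀ n : ℕ, ∃ g, IsAdmissible μ ν π p Set.univ g ∧
      (∫⁻ x, ENNReal.ofReal |g x| ^ p ∂μ) ≤ m ^ p + ((n:ℝ≥0∞) + 1)⁻¹ := by
    intro n
    have hlt : m < (m ^ p + ((n:ℝ≥0∞)+1)⁻¹) ^ (1/p) := by
      have h1 : m ^ p < m ^ p + ((n:ℝ≥0∞)+1)⁻¹ :=
        ENNReal.lt_add_right hmp_fin (by simp)
      have h2 := ENNReal.rpow_lt_rpow h1 (by positivity : (0:ℝ) < 1/p)
      rwa [rpow_cancel' hp0] at h2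
    obtain ⟨g, hgadm, hglt⟩ := exists_adm_lt (hm ▸ hlt)
    refine ⟨g, hgadm, ?_⟩
    have h3 := ENNReal.rpow_le_rpow hglt.le hp0.le
    rwa [eLp_formula hp0, rpow_cancel hp0, rpow_cancel hp0] at h3
  choose f hfadm hfI using hseq
  have hfmeas : ∀ n, Measurable (f n) := fun n => (hfadm n).1
  have hfpos : ∀ n x, 0 ≤ f n x := fun n => (hfadm n).2.1
  have hof : ∀ n, Measurable (fun x => ENNReal.ofReal (f n x)) :=
    fun n => (hfmeas n).ennreal_ofReal
  have hofp : ∀ n, Measurable (fun x => ENNReal.ofReal |f n x| ^ p) :=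
    fun n => ((hfmeas n).abs.ennreal_ofReal).pow_const p
  -- midpoints are admissible
  have hmid : ∀ n k, IsAdmissible μ ν π p Set.univ (fun x => (f n x + f k x)/2) := by
    intro n k
    refine ⟨((hfmeas n).add (hfmeas k)).div_const 2,
      fun x => div_nonneg (add_nonneg (hfpos n x) (hfpos k x)) (by norm_num), ?_, ?_⟩
    · have heq : (fun x => (f n x + f k x)/2) = (2⁻¹ : ℝ) • (fun x => f n x + f k x) := by
        funext x; simp only [Pi.smul_apply, smul_eq_mul]; ring
      rw [heq]
      exact (((hfadm n).2.2.1).add ((hfadm k).2.2.1)).const_smul _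
    · filter_upwards [(hfadm n).2.2.2, (hfadm k).2.2.2] with l h1 h2 _
      have h1 := h1 (Set.mem_univ l); have h2 := h2 (Set.mem_univ l)
      have heq : ∀ x : X, ENNReal.ofReal ((f n x + f k x)/2)
          = (ENNReal.ofReal (f n x) + ENNReal.ofReal (f k x)) / 2 := by
        intro x
        rw [ENNReal.ofReal_div_of_pos (by norm_num),
          ENNReal.ofReal_add (hfpos n x) (hfpos k x)]
        norm_num [ENNReal.ofReal_ofNat]
      calc (1:ℝ≥0∞) = 1/2 + 1/2 := (ENNReal.add_halves 1).symm
      _ ≤ (∫⁻ x, ENNReal.ofReal (f n x) ∂(ν l))/2 + (∫⁻ x, ENNReal.ofReal (f k x) ∂(ν l))/2 := by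
          gcongr
      _ = (∫⁻ x, ENNReal.ofReal (f n x) ∂(ν l) + ∫⁻ x, ENNReal.ofReal (f k x) ∂(ν l))/2 :=
          ENNReal.add_div.symm
      _ = ∫⁻ x, ENNReal.ofReal ((f n x + f k x)/2) ∂(ν l) := by
          simp_rw [heq, div_eq_mul_inv]
          rw [lintegral_mul_const' _ _ (by simp), lintegral_add_left (hof n)]
  have hImid : ∀ n k, m ^ p ≤ ∫⁻ x, ENNReal.ofReal |(f n x + f k x)/2| ^ p ∂μ :=
    fun n k => hIlb _ (hmid n k)
  -- the Cauchy estimate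
  have hcauchy : ∀ δ : ℝ≥0∞, 0 < δ → ∃ N : ℕ, ∀ n, N ≤ n → ∀ k, N ≤ k →
      (∫⁻ x, ENNReal.ofReal |f n x - f k x| ^ p ∂μ) ≤ δ := by
    intro δ hδ
    set E₀ : ℝ≥0∞ := 2 ^ p * (m ^ p + 1) with hE₀
    have hE₀0 : E₀ ≠ 0 := by
      refine mul_ne_zero ?_ (by simp)
      exact (ENNReal.rpow_pos (by norm_num) (by norm_num)).ne'
    have hE₀top : E₀ ≠ ∞ := by
      refine ENNReal.mul_ne_top (ENNReal.rpow_ne_top_of_nonneg hp0.le (by norm_num)) ?_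
      exact ENNReal.add_ne_top.mpr ⟨hmp_fin, ENNReal.one_ne_top⟩
    set w : ℝ≥0∞ := min 1 (δ/2 / E₀) with hw
    have hw0 : w ≠ 0 :=
      (lt_min one_pos (ENNReal.div_pos (ENNReal.half_pos hδ.ne').ne' hE₀top)).ne'
    have hwtop : w ≠ ∞ := ((min_le_left _ _).trans_lt ENNReal.one_lt_top).ne
    set θ : ℝ := w.toReal with hθ
    have hθ0 : 0 < θ := ENNReal.toReal_pos hw0 hwtop
    have hθ1 : θ ≤ 1 := by
      rw [hθ, ← ENNReal.toReal_one]
      exact ENNReal.toReal_mono ENNReal.one_ne_top (min_le_left _ _)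
    have hθp : ENNReal.ofReal (θ ^ p) ≤ δ/2/E₀ := by
      calc ENNReal.ofReal (θ^p) ≤ ENNReal.ofReal θ := by
            apply ENNReal.ofReal_le_ofReal
            calc θ^p ≤ θ^(1:ℝ) := Real.rpow_le_rpow_of_exponent_ge hθ0 hθ1 hp.le
            _ = θ := Real.rpow_one θ
      _ = w := ENNReal.ofReal_toReal hwtop
      _ ≤ δ/2/E₀ := min_le_right _ _
    have hθE : ENNReal.ofReal (θ^p) * E₀ ≤ δ/2 := by
      calc ENNReal.ofReal (θ^p) * E₀ ≤ δ/2/E₀ * E₀ := mul_le_mul_left hθp _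
      _ = δ/2 := ENNReal.div_mul_cancel hE₀0 hE₀top
    obtain ⟨c, hc, hkey⟩ := key_real hp hθ0 hθ1
    set C : ℝ≥0∞ := ENNReal.ofReal c⁻¹ with hC
    set Θ : ℝ≥0∞ := ENNReal.ofReal (θ^p * 2^p) with hΘ
    have hΘ' : Θ = ENNReal.ofReal (θ^p) * 2^p := by
      rw [hΘ, ENNReal.ofReal_mul (Real.rpow_nonneg hθ0.le p)]
      congr 1
      rw [← ENNReal.ofReal_rpow_of_nonneg (by norm_num : (0:ℝ) ≤ 2) hp0.le]
      norm_num [ENNReal.ofReal_ofNat]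
    have hpt : ∀ a b : ℝ, 0 ≤ a → 0 ≤ b →
        ENNReal.ofReal |a - b| ^ p + C * (ENNReal.ofReal |(a + b)/2| ^ p)
          ≤ (C + Θ) * ((ENNReal.ofReal |a| ^ p + ENNReal.ofReal |b| ^ p) / 2) := by
      intro a b ha hb
      have h := hkey a b ha hb
      have e1 : ENNReal.ofReal |a - b| ^ p = ENNReal.ofReal (|a-b|^p) :=
        ENNReal.ofReal_rpow_of_nonneg (abs_nonneg _) hp0.le
      have e2 : ENNReal.ofReal |(a+b)/2| ^ p = ENNReal.ofReal (((a+b)/2)^p) := by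
        rw [abs_of_nonneg (by positivity : (0:ℝ) ≤ (a+b)/2)]
        exact ENNReal.ofReal_rpow_of_nonneg (by positivity) hp0.le
      have e3 : ENNReal.ofReal |a| ^ p = ENNReal.ofReal (a^p) := by
        rw [abs_of_nonneg ha]; exact ENNReal.ofReal_rpow_of_nonneg ha hp0.le
      have e4 : ENNReal.ofReal |b| ^ p = ENNReal.ofReal (b^p) := by
        rw [abs_of_nonneg hb]; exact ENNReal.ofReal_rpow_of_nonneg hb hp0.le
      calc ENNReal.ofReal |a - b| ^ p + C * (ENNReal.ofReal |(a + b)/2| ^ p)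
          = ENNReal.ofReal (|a-b|^p + c⁻¹ * ((a+b)/2)^p) := by
            rw [e1, e2, hC, ← ENNReal.ofReal_mul (inv_nonneg.mpr hc.le),
              ← ENNReal.ofReal_add (by positivity) (by positivity)]
      _ ≤ ENNReal.ofReal ((c⁻¹ + θ^p*2^p) * ((a^p+b^p)/2)) := by
            apply ENNReal.ofReal_le_ofReal
            nlinarith [h]
      _ = (C + Θ) * ((ENNReal.ofReal |a| ^ p + ENNReal.ofReal |b| ^ p) / 2) := by
            rw [e3, e4, hC, hΘ,
              ENNReal.ofReal_mul (by positivity),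
              ENNReal.ofReal_add (inv_nonneg.mpr hc.le) (by positivity),
              ENNReal.ofReal_div_of_pos (by norm_num),
              ENNReal.ofReal_add (by positivity) (by positivity)]
            norm_num
    have hintpt : ∀ n k,
        (∫⁻ x, ENNReal.ofReal |f n x - f k x| ^ p ∂μ)
          + C * (∫⁻ x, ENNReal.ofReal |(f n x + f k x)/2| ^ p ∂μ)
        ≤ (C + Θ) * (((∫⁻ x, ENNReal.ofReal |f n x| ^ p ∂μ)
            + ∫⁻ x, ENNReal.ofReal |f k x| ^ p ∂μ) / 2) := by
      intro n k
      have hm1 : Measurable fun x => ENNReal.ofReal |f n x - f k x| ^ p :=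
        (((hfmeas n).sub (hfmeas k)).abs.ennreal_ofReal).pow_const p
      have hm2 : Measurable fun x => ENNReal.ofReal |(f n x + f k x)/2| ^ p :=
        ((((hfmeas n).add (hfmeas k)).div_const 2).abs.ennreal_ofReal).pow_const p
      have hsplit : (∫⁻ x, (ENNReal.ofReal |f n x - f k x| ^ p
            + C * (ENNReal.ofReal |(f n x + f k x)/2| ^ p)) ∂μ)
          = (∫⁻ x, ENNReal.ofReal |f n x - f k x| ^ p ∂μ)
            + C * (∫⁻ x, ENNReal.ofReal |(f n x + f k x)/2| ^ p ∂μ) := by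
        rw [lintegral_add_left hm1, lintegral_const_mul C hm2]
      have hsplit2 : (∫⁻ x, ((C + Θ) * ((ENNReal.ofReal |f n x| ^ p
              + ENNReal.ofReal |f k x| ^ p) / 2)) ∂μ)
          = (C + Θ) * (((∫⁻ x, ENNReal.ofReal |f n x| ^ p ∂μ)
              + ∫⁻ x, ENNReal.ofReal |f k x| ^ p ∂μ) / 2) := by
        rw [lintegral_const_mul _ (by
          exact (((hofp n).add (hofp k)).div_const 2))]
        congr 1
        simp_rw [div_eq_mul_inv]
        rw [lintegral_mul_const' _ _ (by simp), lintegral_add_left (hofp n)]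
      rw [← hsplit, ← hsplit2]
      exact lintegral_mono fun x => hpt _ _ (hfpos n x) (hfpos k x)
    -- choose N
    have htend : Tendsto (fun N : ℕ => C * ((N:ℝ≥0∞)+1)⁻¹) atTop (𝓝 0) := by
      have h1 : Tendsto (fun N : ℕ => ((N:ℝ≥0∞)+1)⁻¹) atTop (𝓝 0) := by
        have h2 := ENNReal.tendsto_inv_nat_nhds_zero.comp (tendsto_add_atTop_nat 1)
        have he : (fun N : ℕ => ((N:ℝ≥0∞)+1)⁻¹)
            = (fun n : ℕ => (n : ℝ≥0∞)⁻¹) ∘ (fun n : ℕ => n + 1) := by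
          funext N; simp only [Function.comp_apply]; norm_cast
        rw [he]; exact h2
      have h3 : Tendsto (fun N : ℕ => C * ((N:ℝ≥0∞)+1)⁻¹) atTop (𝓝 (C * 0)) :=
        ENNReal.Tendsto.const_mul h1 (Or.inr (hC ▸ ENNReal.ofReal_ne_top))
      simpa using h3
    obtain ⟨N, hN⟩ := eventually_atTop.mp
      (ENNReal.tendsto_nhds_zero.mp htend (δ/2) (ENNReal.half_pos hδ.ne'))
    refine ⟨N, fun n hn k hk => ?_⟩
    have hinvle : ∀ j, N ≤ j → ((j:ℝ≥0∞)+1)⁻¹ ≤ ((N:ℝ≥0∞)+1)⁻¹ := by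
      intro j hj
      gcongr <;> exact_mod_cast hj
    have hJn : (∫⁻ x, ENNReal.ofReal |f n x| ^ p ∂μ) ≤ m^p + ((N:ℝ≥0∞)+1)⁻¹ :=
      (hfI n).trans (add_le_add le_rfl (hinvle n hn))
    have hJk : (∫⁻ x, ENNReal.ofReal |f k x| ^ p ∂μ) ≤ m^p + ((N:ℝ≥0∞)+1)⁻¹ :=
      (hfI k).trans (add_le_add le_rfl (hinvle k hk))
    have havg : ((∫⁻ x, ENNReal.ofReal |f n x| ^ p ∂μ)
        + ∫⁻ x, ENNReal.ofReal |f k x| ^ p ∂μ) / 2 ≤ m^p + ((N:ℝ≥0∞)+1)⁻¹ := by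
      calc ((∫⁻ x, ENNReal.ofReal |f n x| ^ p ∂μ)
            + ∫⁻ x, ENNReal.ofReal |f k x| ^ p ∂μ) / 2
          ≤ ((m^p + ((N:ℝ≥0∞)+1)⁻¹) + (m^p + ((N:ℝ≥0∞)+1)⁻¹)) / 2 := by gcongr
      _ = (m^p + ((N:ℝ≥0∞)+1)⁻¹)/2 + (m^p + ((N:ℝ≥0∞)+1)⁻¹)/2 := ENNReal.add_div
      _ = m^p + ((N:ℝ≥0∞)+1)⁻¹ := ENNReal.add_halves _
    have hCfin : C * m^p ≠ ∞ := ENNReal.mul_ne_top ENNReal.ofReal_ne_top hmp_fin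
    have h2 : (∫⁻ x, ENNReal.ofReal |f n x - f k x| ^ p ∂μ) + C * m^p
        ≤ C * m^p + (C * ((N:ℝ≥0∞)+1)⁻¹ + Θ * (m^p + 1)) := by
      calc (∫⁻ x, ENNReal.ofReal |f n x - f k x| ^ p ∂μ) + C * m^p
          ≤ (∫⁻ x, ENNReal.ofReal |f n x - f k x| ^ p ∂μ)
            + C * (∫⁻ x, ENNReal.ofReal |(f n x + f k x)/2| ^ p ∂μ) := by
            gcongr
            exact hImid n k
      _ ≤ (C + Θ) * (((∫⁻ x, ENNReal.ofReal |f n x| ^ p ∂μ)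
            + ∫⁻ x, ENNReal.ofReal |f k x| ^ p ∂μ) / 2) := hintpt n k
      _ ≤ (C + Θ) * (m^p + ((N:ℝ≥0∞)+1)⁻¹) := mul_le_mul_right havg _
      _ = C * m^p + (C * ((N:ℝ≥0∞)+1)⁻¹ + (Θ * m^p + Θ * ((N:ℝ≥0∞)+1)⁻¹)) := by ring
      _ ≤ C * m^p + (C * ((N:ℝ≥0∞)+1)⁻¹ + Θ * (m^p + 1)) := by
            gcongr
            calc Θ * m^p + Θ * ((N:ℝ≥0∞)+1)⁻¹ = Θ * (m^p + ((N:ℝ≥0∞)+1)⁻¹) := by ring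
            _ ≤ Θ * (m^p + 1) := by
                gcongr
                exact ENNReal.inv_le_one.mpr (by simp)
    have h3 : (∫⁻ x, ENNReal.ofReal |f n x - f k x| ^ p ∂μ)
        ≤ C * ((N:ℝ≥0∞)+1)⁻¹ + Θ * (m^p + 1) := by
      rw [add_comm (∫⁻ x, ENNReal.ofReal |f n x - f k x| ^ p ∂μ) (C * m^p)] at h2
      exact (ENNReal.add_le_add_iff_left hCfin).mp h2
    calc (∫⁻ x, ENNReal.ofReal |f n x - f k x| ^ p ∂μ)
        ≤ C * ((N:ℝ≥0∞)+1)⁻¹ + Θ * (m^p + 1) := h3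
    _ ≤ δ/2 + δ/2 := by
        refine add_le_add (hN N le_rfl) ?_
        calc Θ * (m^p + 1) = ENNReal.ofReal (θ^p) * E₀ := by
              rw [hΘ', hE₀]; ring
        _ ≤ δ/2 := hθE
    _ = δ := ENNReal.add_halves δ
  -- convert to eLpNorm Cauchy
  have hcauchy' : ∀ δ : ℝ≥0∞, 0 < δ → ∃ N : ℕ, ∀ n, N ≤ n → ∀ k, N ≤ k →
      eLpNorm (fun x => f n x - f k x) q μ ≤ δ := by
    intro δ hδ
    by_cases hδtop : δ = ∞
    · exact ⟨0, fun n _ k _ => hδtop ▸ le_top⟩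
    obtain ⟨N, hN⟩ := hcauchy (δ^p) (ENNReal.rpow_pos hδ hδtop)
    refine ⟨N, fun n hn k hk => ?_⟩
    rw [eLp_formula hp0]
    calc (∫⁻ x, ENNReal.ofReal |f n x - f k x| ^ p ∂μ) ^ (1/p)
        ≤ (δ^p)^(1/p) := ENNReal.rpow_le_rpow (hN n hn k hk) (by positivity)
    _ = δ := rpow_cancel' hp0 δ
  set FL : ℕ → Lp ℝ q μ := fun n => ((hfadm n).2.2.1).toLp (f n) with hFL
  have hFLcauchy : CauchySeq FL := by
    rw [Metric.cauchySeq_iff]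
    intro ε hε
    obtain ⟨N, hN⟩ := hcauchy' (ENNReal.ofReal (ε/2)) (ENNReal.ofReal_pos.mpr (half_pos hε))
    refine ⟨N, fun n hn k hk => ?_⟩
    rw [Lp.dist_def]
    have he : eLpNorm (⇑(FL n) - ⇑(FL k)) q μ = eLpNorm (fun x => f n x - f k x) q μ := by
      apply eLpNorm_congr_ae
      filter_upwards [MemLp.coeFn_toLp ((hfadm n).2.2.1),
        MemLp.coeFn_toLp ((hfadm k).2.2.1)] with x h1 h2
      simp [hFL, h1, h2]
    rw [he]
    calc (eLpNorm (fun x => f n x - f k x) q μ).toReal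
        ≤ (ENNReal.ofReal (ε/2)).toReal :=
          ENNReal.toReal_mono ENNReal.ofReal_ne_top (hN n hn k hk)
    _ = ε/2 := ENNReal.toReal_ofReal (half_pos hε).le
    _ < ε := half_lt_self hε
  obtain ⟨F₀, hF₀⟩ := cauchySeq_tendsto_of_complete hFLcauchy
  set g₀ : X → ℝ := ⇑F₀ with hg₀
  have hg₀meas : Measurable g₀ := (Lp.stronglyMeasurable F₀).measurable
  set f₀ : X → ℝ := fun x => max (g₀ x) 0 with hf₀def
  have hf₀meas : Measurable f₀ := hg₀meas.max measurable_const
  have hf₀pos : ∀ x, 0 ≤ f₀ x := fun x => le_max_right _ _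
  have hf₀mem : MemLp f₀ q μ := by
    refine MemLp.of_le (Lp.memLp F₀) hf₀meas.aestronglyMeasurable
      (Eventually.of_forall fun x => ?_)
    simp only [hf₀def, Real.norm_eq_abs]
    rcases le_or_gt 0 (g₀ x) with h | h
    · rw [max_eq_left h]
    · rw [max_eq_right h.le]; simp [abs_nonneg]
  have hptled : ∀ n x, |f n x - f₀ x| ≤ |f n x - g₀ x| := by
    intro n x
    simp only [hf₀def]
    rcases le_or_gt 0 (g₀ x) with h | h
    · rw [max_eq_left h]
    · rw [max_eq_right h.le, sub_zero, abs_of_nonneg (hfpos n x)]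
      calc f n x ≤ f n x - g₀ x := by linarith
      _ ≤ |f n x - g₀ x| := le_abs_self _
  have htend0 : Tendsto (fun n => eLpNorm (fun x => f n x - f₀ x) q μ) atTop (𝓝 0) := by
    rw [ENNReal.tendsto_nhds_zero]
    intro ε hε
    by_cases hεtop : ε = ∞
    · exact Eventually.of_forall fun n => hεtop ▸ le_top
    obtain ⟨N, hd⟩ := (Metric.tendsto_atTop.mp hF₀) ε.toReal (ENNReal.toReal_pos hε.ne' hεtop)
    filter_upwards [eventually_ge_atTop N] with n hn
    have h1 : eLpNorm (fun x => f n x - g₀ x) q μ = eLpNorm (⇑(FL n) - ⇑F₀) q μ := by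
      apply eLpNorm_congr_ae
      filter_upwards [MemLp.coeFn_toLp ((hfadm n).2.2.1)] with x hx
      simp [hFL, hx, hg₀]
    have h2 : eLpNorm (⇑(FL n) - ⇑F₀) q μ ≠ ∞ := by
      rw [← eLpNorm_congr_ae (Lp.coeFn_sub (FL n) F₀)]
      exact Lp.eLpNorm_ne_top (FL n - F₀)
    calc eLpNorm (fun x => f n x - f₀ x) q μ
        ≤ eLpNorm (fun x => f n x - g₀ x) q μ :=
          eLpNorm_mono fun x => by
            simp only [Real.norm_eq_abs]; exact hptled n x
    _ = ENNReal.ofReal (dist (FL n) F₀) := by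
        rw [h1, Lp.dist_def, ENNReal.ofReal_toReal h2]
    _ ≤ ε := by
        rw [← ENNReal.ofReal_toReal hεtop]
        exact ENNReal.ofReal_le_ofReal (hd n hn).le
  have hinvtend : Tendsto (fun N : ℕ => ((N:ℝ≥0∞)+1)⁻¹) atTop (𝓝 0) := by
    have h2 := ENNReal.tendsto_inv_nat_nhds_zero.comp (tendsto_add_atTop_nat 1)
    have he : (fun N : ℕ => ((N:ℝ≥0∞)+1)⁻¹)
        = (fun n : ℕ => (n : ℝ≥0∞)⁻¹) ∘ (fun n : ℕ => n + 1) := by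
      funext N; simp only [Function.comp_apply]; norm_cast
    rw [he]; exact h2
  -- select a rapidly converging subsequence
  have hsel : ∀ k : ℕ, ∃ n : ℕ,
      eLpNorm (fun x => f n x - f₀ x) q μ ≤ (4:ℝ≥0∞)⁻¹^k * 4⁻¹ := by
    intro k
    have hpos : (0:ℝ≥0∞) < 4⁻¹^k * 4⁻¹ :=
      ENNReal.mul_pos (pow_ne_zero k (ENNReal.inv_ne_zero.mpr (by norm_num)))
        (ENNReal.inv_ne_zero.mpr (by norm_num))
    exact (ENNReal.tendsto_nhds_zero.mp htend0 _ hpos).exists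
  choose sel hsel using hsel
  set d : ℕ → X → ℝ := fun k x => f (sel k) x - f₀ x with hd
  have hdmeas : ∀ k, Measurable (d k) := fun k => (hfmeas (sel k)).sub hf₀meas
  set Sm : ℕ → X → ℝ := fun K x => ∑ k ∈ Finset.range K, (2:ℝ)^k * |d k x| with hSm
  have hSmmeas : ∀ K, Measurable (Sm K) := fun K =>
    Finset.measurable_sum _ fun k _ => measurable_const.mul (hdmeas k).abs
  have hSmpos : ∀ K x, 0 ≤ Sm K x := fun K x =>
    Finset.sum_nonneg fun k _ => mul_nonneg (by positivity) (abs_nonneg _)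
  have h24 : (2:ℝ≥0∞) * 4⁻¹ = 2⁻¹ := by
    rw [show (4:ℝ≥0∞) = 2*2 by norm_num,
      ENNReal.mul_inv (Or.inl (by norm_num)) (Or.inl ENNReal.ofNat_ne_top), ← mul_assoc,
      ENNReal.mul_inv_cancel (by norm_num) ENNReal.ofNat_ne_top, one_mul]
  have hSmnorm : ∀ K, eLpNorm (Sm K) q μ ≤ 1 := by
    intro K
    have h1 : eLpNorm (Sm K) q μ
        ≤ ∑ k ∈ Finset.range K, eLpNorm (fun x => (2:ℝ)^k * |d k x|) q μ := by
      have h2 := eLpNorm_sum_le (μ := μ) (p := q)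
        (f := fun (k : ℕ) (x : X) => (2:ℝ)^k * |d k x|) (s := Finset.range K)
        (fun i _ => (measurable_const.mul (hdmeas i).abs).aestronglyMeasurable) hq1
      refine le_trans (le_of_eq ?_) h2
      congr 1
      funext x
      simp [hSm, Finset.sum_apply]
    have h3 : ∀ k : ℕ, eLpNorm (fun x => (2:ℝ)^k * |d k x|) q μ ≤ 2⁻¹^k * 4⁻¹ := by
      intro k
      have h4 : (fun x => (2:ℝ)^k * |d k x|) = ((2:ℝ)^k) • (fun x => |d k x|) := by
        funext x; simp [smul_eq_mul]
      have h5 : eLpNorm (fun x => (2:ℝ)^k * |d k x|) q μ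
          = ((2:ℝ≥0∞)^k) * eLpNorm (fun x => |d k x|) q μ := by
        rw [h4, eLpNorm_const_smul]
        congr 1
        rw [enorm_pow, Real.enorm_eq_ofReal (by norm_num), ENNReal.ofReal_ofNat]
      have h6 : eLpNorm (fun x => |d k x|) q μ = eLpNorm (d k) q μ := by
        have h7 : (fun x => |d k x|) = (fun x => ‖d k x‖) := by
          funext x; rw [Real.norm_eq_abs]
        rw [h7, eLpNorm_norm]
      calc eLpNorm (fun x => (2:ℝ)^k * |d k x|) q μ
          = (2:ℝ≥0∞)^k * eLpNorm (d k) q μ := by rw [h5, h6]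
      _ ≤ (2:ℝ≥0∞)^k * ((4:ℝ≥0∞)⁻¹^k * 4⁻¹) := mul_le_mul_right (hsel k) _
      _ = ((2:ℝ≥0∞) * 4⁻¹)^k * 4⁻¹ := by rw [mul_pow, ← mul_assoc]
      _ = 2⁻¹^k * 4⁻¹ := by rw [h24]
    calc eLpNorm (Sm K) q μ
        ≤ ∑ k ∈ Finset.range K, eLpNorm (fun x => (2:ℝ)^k * |d k x|) q μ := h1
    _ ≤ ∑ k ∈ Finset.range K, (2:ℝ≥0∞)⁻¹^k * 4⁻¹ := Finset.sum_le_sum fun k _ => h3 k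
    _ = (∑ k ∈ Finset.range K, (2:ℝ≥0∞)⁻¹^k) * 4⁻¹ := (Finset.sum_mul _ _ _).symm
    _ ≤ (∑' k : ℕ, (2:ℝ≥0∞)⁻¹^k) * 4⁻¹ := mul_le_mul_left (ENNReal.sum_le_tsum _) _
    _ = 2 * 4⁻¹ := by rw [ENNReal.tsum_geometric, ENNReal.one_sub_inv_two, inv_inv]
    _ = 2⁻¹ := h24
    _ ≤ 1 := ENNReal.inv_le_one.mpr one_le_two
  -- the maximal function G
  set G : X → ℝ≥0∞ := fun x => ⨆ K, ENNReal.ofReal (Sm K x) with hG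
  have hGmeas : Measurable G := Measurable.iSup fun K => (hSmmeas K).ennreal_ofReal
  have hGmono : ∀ x ⦃K L : ℕ⦄, K ≤ L →
      ENNReal.ofReal (Sm K x) ≤ ENNReal.ofReal (Sm L x) := by
    intro x K L hKL
    apply ENNReal.ofReal_le_ofReal
    apply Finset.sum_le_sum_of_subset_of_nonneg (Finset.range_subset_range.mpr hKL)
    intro k _ _; positivity
  have hGint : ∫⁻ x, G x ^ p ∂μ ≤ 1 := by
    calc ∫⁻ x, G x ^ p ∂μ = ∫⁻ x, ⨆ K, ENNReal.ofReal (Sm K x) ^ p ∂μ :=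
        lintegral_congr fun x => ennreal_iSup_rpow hp0 _
    _ = ⨆ K, ∫⁻ x, ENNReal.ofReal (Sm K x) ^ p ∂μ :=
        lintegral_iSup (fun K => ((hSmmeas K).ennreal_ofReal).pow_const p)
          (fun K L hKL x => ENNReal.rpow_le_rpow (hGmono x hKL) hp0.le)
    _ ≤ 1 := by
        apply iSup_le
        intro K
        have h2 : ∫⁻ x, ENNReal.ofReal (Sm K x) ^ p ∂μ = (eLpNorm (Sm K) q μ)^p := by
          rw [eLp_formula hp0, rpow_cancel hp0]
          exact lintegral_congr fun x => by rw [abs_of_nonneg (hSmpos K x)]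
        rw [h2]
        calc (eLpNorm (Sm K) q μ)^p ≤ 1^p := ENNReal.rpow_le_rpow (hSmnorm K) hp0.le
        _ = 1 := ENNReal.one_rpow p
  have hNset : μ {x | G x = ∞} = 0 := by
    have h1 : ∀ᵐ x ∂μ, G x ^ p < ∞ :=
      ae_lt_top (hGmeas.pow_const p) (hGint.trans_lt ENNReal.one_lt_top).ne
    have h2 := ae_iff.mp h1
    refine measure_mono_null ?_ h2
    intro x hx
    simp only [Set.mem_setOf_eq, not_lt, top_le_iff]
    rw [Set.mem_setOf_eq] at hx
    rw [hx]
    exact ENNReal.top_rpow_of_pos hp0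
  have hNbadmeas : MeasurableSet {x | G x = ∞} := hGmeas (measurableSet_singleton ∞)
  have hHN := hH {x | G x = ∞} hNbadmeas hNset
  -- the exceptional family T
  set T : Set Λ := {l | ∫⁻ x, G x ∂(ν l) = ∞} with hT
  have hTmeas : MeasurableSet T :=
    ((Measure.measurable_lintegral hGmeas).comp hν) (measurableSet_singleton ∞)
  have hTmod : pModulus μ ν π p T = 0 := by
    have hle : ∀ ε : ℝ≥0, 0 < ε → pModulus μ ν π p T ≤ 2 * (ε:ℝ≥0∞) := by
      intro ε hε
      set h : X → ℝ := fun x => ((ε:ℝ≥0∞) * G x).toReal with hh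
      have hhmeas : Measurable h :=
        ENNReal.measurable_toReal.comp (measurable_const.mul hGmeas)
      have hhnorm : eLpNorm h q μ ≤ 2 * (ε:ℝ≥0∞) := by
        rw [eLp_formula hp0]
        have h3 : ∀ x, ENNReal.ofReal |h x| ^ p ≤ ((ε:ℝ≥0∞))^p * (G x)^p := by
          intro x
          rw [abs_of_nonneg ENNReal.toReal_nonneg]
          calc ENNReal.ofReal (h x) ^ p ≤ ((ε:ℝ≥0∞) * G x)^p :=
            ENNReal.rpow_le_rpow ENNReal.ofReal_toReal_le hp0.le
          _ = (ε:ℝ≥0∞)^p * (G x)^p := ENNReal.mul_rpow_of_nonneg _ _ hp0.le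
        calc (∫⁻ x, ENNReal.ofReal |h x| ^ p ∂μ)^(1/p)
            ≤ (∫⁻ x, (ε:ℝ≥0∞)^p * (G x)^p ∂μ)^(1/p) :=
              ENNReal.rpow_le_rpow (lintegral_mono h3) (by positivity)
        _ = ((ε:ℝ≥0∞)^p * ∫⁻ x, (G x)^p ∂μ)^(1/p) := by
              rw [lintegral_const_mul _ (hGmeas.pow_const p)]
        _ ≤ ((ε:ℝ≥0∞)^p * 1)^(1/p) := by
              apply ENNReal.rpow_le_rpow _ (by positivity)
              exact mul_le_mul_right hGint _
        _ = (ε:ℝ≥0∞) := by rw [mul_one, rpow_cancel' hp0]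
        _ ≤ 2 * (ε:ℝ≥0∞) := le_mul_of_one_le_left (by simp) one_le_two
      have hhadm : IsAdmissible μ ν π p T h := by
        refine ⟨hhmeas, fun x => ENNReal.toReal_nonneg,
          ⟨hhmeas.aestronglyMeasurable, lt_of_le_of_lt hhnorm ?_⟩, ?_⟩
        · exact ENNReal.mul_lt_top ENNReal.ofNat_lt_top ENNReal.coe_lt_top
        · filter_upwards [hHN] with l hl hlT
          have hae : ∀ᵐ x ∂(ν l), ENNReal.ofReal (h x) = (ε:ℝ≥0∞) * G x := by
            filter_upwards [measure_eq_zero_iff_ae_notMem.mp hl] with x hx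
            have hGx : G x ≠ ∞ := hx
            rw [hh]
            exact ENNReal.ofReal_toReal (ENNReal.mul_ne_top ENNReal.coe_ne_top hGx)
          rw [lintegral_congr_ae hae, lintegral_const_mul _ hGmeas]
          have hlT' : (∫⁻ x, G x ∂(ν l)) = ∞ := hlT
          rw [hlT', ENNReal.mul_top (by exact_mod_cast hε.ne')]
          exact le_top
      exact (iInf₂_le h hhadm).trans hhnorm
    refine le_antisymm ?_ (by simp)
    refine ENNReal.le_of_forall_pos_le_add fun ε hε _ => ?_
    calc pModulus μ ν π p T ≤ 2 * ((ε/2 : ℝ≥0) : ℝ≥0∞) := hle _ (half_pos hε)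
    _ = 2 * ((ε:ℝ≥0∞)/2) := by rw [ENNReal.coe_div (by norm_num)]; norm_num
    _ = (ε:ℝ≥0∞) := ENNReal.mul_div_cancel' (by norm_num) (by simp)
    _ = 0 + (ε:ℝ≥0∞) := (zero_add _).symm
  have hTnull : (μ.map π) T = 0 := by
    rw [Measure.map_apply hπ hTmeas]
    exact hZ T hTmeas hTmod
  -- admissibility of f₀
  have hf₀adm : IsAdmissible μ ν π p Set.univ f₀ := by
    refine ⟨hf₀meas, hf₀pos, hf₀mem, ?_⟩
    have hconstr : ∀ᵐ l ∂(μ.map π), ∀ k : ℕ,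
        1 ≤ ∫⁻ x, ENNReal.ofReal (f (sel k) x) ∂(ν l) := by
      rw [ae_all_iff]
      intro k
      filter_upwards [(hfadm (sel k)).2.2.2] with l hl
      exact hl (Set.mem_univ l)
    filter_upwards [hconstr, measure_eq_zero_iff_ae_notMem.mp hTnull] with l h1 h2 _
    have hC : (∫⁻ x, G x ∂(ν l)) ≠ ∞ := h2
    have hdk : ∀ k : ℕ, (∫⁻ x, ENNReal.ofReal |d k x| ∂(ν l))
        ≤ 2⁻¹^k * ∫⁻ x, G x ∂(ν l) := by
      intro k
      have hkG : ∀ x, (2:ℝ≥0∞)^k * ENNReal.ofReal |d k x| ≤ G x := by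
        intro x
        have h3 : (2:ℝ)^k * |d k x| ≤ Sm (k+1) x :=
          Finset.single_le_sum (f := fun j => (2:ℝ)^j * |d j x|)
            (fun j _ => by positivity) (Finset.self_mem_range_succ k)
        calc (2:ℝ≥0∞)^k * ENNReal.ofReal |d k x|
            = ENNReal.ofReal ((2:ℝ)^k * |d k x|) := by
              rw [ENNReal.ofReal_mul (by positivity), ENNReal.ofReal_pow (by norm_num)]
              norm_num
        _ ≤ ENNReal.ofReal (Sm (k+1) x) := ENNReal.ofReal_le_ofReal h3
        _ ≤ G x := le_iSup (fun K => ENNReal.ofReal (Sm K x)) (k+1)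
      have h4 : (2:ℝ≥0∞)^k * (∫⁻ x, ENNReal.ofReal |d k x| ∂(ν l))
          ≤ ∫⁻ x, G x ∂(ν l) := by
        rw [← lintegral_const_mul _ ((hdmeas k).abs.ennreal_ofReal)]
        exact lintegral_mono hkG
      calc (∫⁻ x, ENNReal.ofReal |d k x| ∂(ν l))
          = 2⁻¹^k * ((2:ℝ≥0∞)^k * ∫⁻ x, ENNReal.ofReal |d k x| ∂(ν l)) := by
            rw [← mul_assoc, ← mul_pow,
              ENNReal.inv_mul_cancel (by norm_num) ENNReal.ofNat_ne_top, one_pow, one_mul]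
      _ ≤ 2⁻¹^k * ∫⁻ x, G x ∂(ν l) := mul_le_mul_right h4 _
    have hub : ∀ k : ℕ, (1:ℝ≥0∞)
        ≤ (∫⁻ x, ENNReal.ofReal (f₀ x) ∂(ν l)) + 2⁻¹^k * ∫⁻ x, G x ∂(ν l) := by
      intro k
      have h5 : ∀ x, ENNReal.ofReal (f (sel k) x)
          ≤ ENNReal.ofReal (f₀ x) + ENNReal.ofReal |d k x| := by
        intro x
        calc ENNReal.ofReal (f (sel k) x) ≤ ENNReal.ofReal (f₀ x + |d k x|) := by
              apply ENNReal.ofReal_le_ofReal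
              have h6 : f (sel k) x - f₀ x ≤ |d k x| := le_abs_self _
              linarith
        _ = ENNReal.ofReal (f₀ x) + ENNReal.ofReal |d k x| :=
            ENNReal.ofReal_add (hf₀pos x) (abs_nonneg _)
      calc (1:ℝ≥0∞) ≤ ∫⁻ x, ENNReal.ofReal (f (sel k) x) ∂(ν l) := h1 k
      _ ≤ ∫⁻ x, (ENNReal.ofReal (f₀ x) + ENNReal.ofReal |d k x|) ∂(ν l) :=
          lintegral_mono h5
      _ = (∫⁻ x, ENNReal.ofReal (f₀ x) ∂(ν l)) + ∫⁻ x, ENNReal.ofReal |d k x| ∂(ν l) :=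
          lintegral_add_left hf₀meas.ennreal_ofReal _
      _ ≤ _ := add_le_add le_rfl (hdk k)
    have hlim : Tendsto (fun k : ℕ => (∫⁻ x, ENNReal.ofReal (f₀ x) ∂(ν l))
        + 2⁻¹^k * ∫⁻ x, G x ∂(ν l)) atTop
        (𝓝 ((∫⁻ x, ENNReal.ofReal (f₀ x) ∂(ν l)) + 0 * ∫⁻ x, G x ∂(ν l))) := by
      apply Tendsto.add tendsto_const_nhds
      apply ENNReal.Tendsto.mul_const _ (Or.inr hC)
      exact ENNReal.tendsto_pow_atTop_nhds_zero_of_lt_one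
        (ENNReal.inv_lt_one.mpr one_lt_two)
    have h7 := ge_of_tendsto' hlim hub
    simpa using h7
  -- conclusion
  have hle1 : m ≤ eLpNorm f₀ q μ := iInf₂_le f₀ hf₀adm
  have hle2 : eLpNorm f₀ q μ ≤ m := by
    refine ENNReal.le_of_forall_pos_le_add fun η hη hmtop => ?_
    have hη0 : ((η:ℝ≥0∞)) ≠ 0 := by exact_mod_cast hη.ne'
    have hη2 : (0:ℝ≥0∞) < (η:ℝ≥0∞)/2 := ENNReal.half_pos hη0
    have hη2top : ((η:ℝ≥0∞)/2) ≠ ∞ :=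
      (ENNReal.div_lt_top ENNReal.coe_ne_top (by norm_num)).ne
    have hev1 := ENNReal.tendsto_nhds_zero.mp htend0 ((η:ℝ≥0∞)/2) hη2
    have hev2 : ∀ᶠ n : ℕ in atTop, ((n:ℝ≥0∞)+1)⁻¹ ≤ ((η:ℝ≥0∞)/2)^p :=
      ENNReal.tendsto_nhds_zero.mp hinvtend _ (ENNReal.rpow_pos hη2 hη2top)
    obtain ⟨n, h7, h8⟩ := (hev1.and hev2).exists
    have h9 : eLpNorm (f n) q μ ≤ m + (η:ℝ≥0∞)/2 := by
      rw [eLp_formula hp0]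
      calc (∫⁻ x, ENNReal.ofReal |f n x| ^ p ∂μ)^(1/p)
          ≤ (m^p + ((η:ℝ≥0∞)/2)^p)^(1/p) := by
            apply ENNReal.rpow_le_rpow _ (by positivity)
            exact (hfI n).trans (add_le_add le_rfl h8)
      _ ≤ ((m + (η:ℝ≥0∞)/2)^p)^(1/p) :=
          ENNReal.rpow_le_rpow (ENNReal.add_rpow_le_rpow_add _ _ hp.le) (by positivity)
      _ = m + (η:ℝ≥0∞)/2 := rpow_cancel' hp0 _
    have h10 : eLpNorm f₀ q μ
        ≤ eLpNorm (fun x => f₀ x - f n x) q μ + eLpNorm (f n) q μ := by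
      have h11 : f₀ = (fun x => (f₀ x - f n x) + f n x) := by funext x; ring
      calc eLpNorm f₀ q μ = eLpNorm (fun x => (f₀ x - f n x) + f n x) q μ := by rw [← h11]
      _ ≤ _ := eLpNorm_add_le ((hf₀meas.sub (hfmeas n)).aestronglyMeasurable)
            (hfmeas n).aestronglyMeasurable hq1
    have h12 : eLpNorm (fun x => f₀ x - f n x) q μ = eLpNorm (fun x => f n x - f₀ x) q μ := by
      have h13 : (fun x => f₀ x - f n x) = -(fun x => f n x - f₀ x) := by
        funext x; simp
      rw [h13, eLpNorm_neg]
    calc eLpNorm f₀ q μ ≤ eLpNorm (fun x => f n x - f₀ x) q μ + eLpNorm (f n) q μ := by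
          rw [← h12]; exact h10
    _ ≤ (η:ℝ≥0∞)/2 + (m + (η:ℝ≥0∞)/2) := add_le_add h7 h9
    _ = m + ((η:ℝ≥0∞)/2 + (η:ℝ≥0∞)/2) := by ac_rfl
    _ = m + (η:ℝ≥0∞) := by rw [ENNReal.add_halves]
  exact ⟨f₀, hf₀adm, le_antisymm hle2 hle1⟩

end BackwardDir

/-- Assuming an admissible function for the whole family exists
(equivalently, mod_p(F) < ∞), an extremal function for the p-modulus exists if and only if
every measurable subfamily S ⊆ Λ with mod_p(S) = 0 satisfies μ(π⁻¹(S)) = 0. -/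
theorem statement0 {X Λ : Type*} [MeasurableSpace X] [MeasurableSpace Λ]
    (μ : MeasureTheory.Measure X) [SigmaFinite μ] (ν : Λ → MeasureTheory.Measure X)
    (π : X → Λ) (hπ : Measurable π) (hν : Measurable ν)
    (hK : ∀ l : Λ, ν l {x | π x ≠ l} = 0)
    (hH : ∀ N : Set X, MeasurableSet N → μ N = 0 → ∀ᵐ l ∂(μ.map π), ν l N = 0)
    (p : ℝ) (hp : 1 < p)
    (hadm : ∃ f, IsAdmissible μ ν π p Set.univ f) :
    (∃ f₀, IsExtremal μ ν π p f₀) ↔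
      ∀ S : Set Λ, MeasurableSet S → pModulus μ ν π p S = 0 → μ (π ⁻¹' S) = 0 := by
  constructor
  · rintro ⟨f₀, hf₀⟩ S hS h0
    exact forward_dir μ ν π hπ hK hH p hp f₀ hf₀ S hS h0
  · intro hZ
    exact backward_dir μ ν π hπ hν hH p hp hadm hZ
end

section
/- If f₀ is an extremal function for the p-modulus mod_p(F) and mod_p(F) > 0, then ∫_X f₀ dν_λ = 1 for π_*μ-almost every λ ∈ Λ (i.e. the leaf integral of f₀ equals 1 on almost every leaf). -/
open MeasureTheory ENNReal

/-- If f₀ is an extremal function for the p-modulus and mod_p(F) > 0, then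
the leaf integral of f₀ equals 1 on π_*μ-almost every leaf. -/
theorem statement1 {X Λ : Type*} [MeasurableSpace X] [MeasurableSpace Λ]
    (μ : MeasureTheory.Measure X) [SigmaFinite μ] (ν : Λ → MeasureTheory.Measure X)
    (π : X → Λ) (hπ : Measurable π) (hν : Measurable ν)
    (hK : ∀ l : Λ, ν l {x | π x ≠ l} = 0)
    (hH : ∀ N : Set X, MeasurableSet N → μ N = 0 → ∀ᵐ l ∂(μ.map π), ν l N = 0)
    (p : ℝ) (hp : 1 < p)
    (f₀ : X → ℝ) (hf₀ : IsExtremal μ ν π p f₀)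
    (hpos : 0 < pModulus μ ν π p Set.univ) :
    ∀ᵐ l ∂(μ.map π), ∫⁻ x, ENNReal.ofReal (f₀ x) ∂(ν l) = 1 := by
  classical
  obtain ⟨⟨hmeas, hnn, hmem, hadm⟩, hext⟩ := hf₀
  have hp0 : 0 < p := lt_trans one_pos hp
  have hI : Measurable (fun l => ∫⁻ x, ENNReal.ofReal (f₀ x) ∂(ν l)) :=
    (Measure.measurable_lintegral (ENNReal.measurable_ofReal.comp hmeas)).comp hν
  set A : ℕ → Set Λ := fun n =>
    {l | ENNReal.ofReal (1 + ((n : ℝ) + 1)⁻¹) ≤ ∫⁻ x, ENNReal.ofReal (f₀ x) ∂(ν l)}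
    with hAdef
  have hAmeas : ∀ n, MeasurableSet (A n) := fun n =>
    measurableSet_le measurable_const hI
  -- main claim: each A n is null
  have hmain : ∀ n, (μ.map π) (A n) = 0 := by
    intro n
    by_contra hA
    have hc1 : (1 : ℝ) < 1 + ((n : ℝ) + 1)⁻¹ := by
      have : (0:ℝ) < ((n : ℝ) + 1)⁻¹ := by positivity
      linarith
    set c : ℝ := 1 + ((n : ℝ) + 1)⁻¹ with hcdef
    have hc0 : 0 < c := lt_trans one_pos hc1
    -- the competitor function
    set f : X → ℝ := fun x => if π x ∈ A n then f₀ x / c else f₀ x with hfdef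
    have hfmeas : Measurable f := by
      rw [hfdef]
      exact Measurable.ite (hπ (hAmeas n)) (hmeas.div_const c) hmeas
    have hfnn : ∀ x, 0 ≤ f x := by
      intro x
      rw [hfdef]
      by_cases hx : π x ∈ A n <;> simp only [hx, if_true, if_false]
      · exact div_nonneg (hnn x) hc0.le
      · exact hnn x
    have hfle : ∀ x, f x ≤ f₀ x := by
      intro x
      rw [hfdef]
      by_cases hx : π x ∈ A n <;> simp only [hx, if_true, if_false]
      · exact div_le_self (hnn x) hc1.le
      · exact le_rfl
    have hfmem : MemLp f (ENNReal.ofReal p) μ :=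
      hmem.mono hfmeas.aestronglyMeasurable (Filter.Eventually.of_forall fun x => by
        rw [Real.norm_of_nonneg (hfnn x), Real.norm_of_nonneg (hnn x)]; exact hfle x)
    -- f is admissible
    have hfadm : IsAdmissible μ ν π p Set.univ f := by
      refine ⟨hfmeas, hfnn, hfmem, ?_⟩
      filter_upwards [hadm] with l hl _
      have hconc : ∀ᵐ x ∂(ν l), π x = l := by
        rw [ae_iff]; exact hK l
      by_cases hlA : l ∈ A n
      · have heq : ∀ᵐ x ∂(ν l), ENNReal.ofReal (f x)
            = ENNReal.ofReal (f₀ x) * ENNReal.ofReal c⁻¹ := by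
          filter_upwards [hconc] with x hx
          have hxT : π x ∈ A n := hx ▸ hlA
          rw [hfdef]
          simp only [hxT, if_true, div_eq_mul_inv]
          rw [ENNReal.ofReal_mul (hnn x)]
        rw [lintegral_congr_ae heq, lintegral_mul_const _ hmeas.ennreal_ofReal]
        have hcl : ENNReal.ofReal c ≤ ∫⁻ x, ENNReal.ofReal (f₀ x) ∂(ν l) := hlA
        calc (1 : ℝ≥0∞) = ENNReal.ofReal c * ENNReal.ofReal c⁻¹ := by
              rw [← ENNReal.ofReal_mul hc0.le, mul_inv_cancel₀ (ne_of_gt hc0),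
                ENNReal.ofReal_one]
          _ ≤ (∫⁻ x, ENNReal.ofReal (f₀ x) ∂(ν l)) * ENNReal.ofReal c⁻¹ :=
              mul_le_mul_left hcl _
      · have heq : ∀ᵐ x ∂(ν l), ENNReal.ofReal (f x) = ENNReal.ofReal (f₀ x) := by
          filter_upwards [hconc] with x hx
          have hxT : π x ∉ A n := hx ▸ hlA
          rw [hfdef]; simp [hxT]
        rw [lintegral_congr_ae heq]
        exact hl trivial
    -- the set where f is strictly smaller has positive measure
    set B : Set X := (π ⁻¹' (A n)) ∩ {x | 0 < f₀ x} with hBdef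
    have hBmeas : MeasurableSet B :=
      (hπ (hAmeas n)).inter (measurableSet_lt measurable_const hmeas)
    have hBpos : μ B ≠ 0 := by
      intro hB0
      have hae := hH B hBmeas hB0
      have hcontr : ∀ᵐ l ∂(μ.map π), l ∉ A n := by
        filter_upwards [hae] with l hl
        intro hlA
        have hconc : ∀ᵐ x ∂(ν l), π x = l := by rw [ae_iff]; exact hK l
        have hnB : ∀ᵐ x ∂(ν l), x ∉ B := by rw [ae_iff]; simpa using hl
        have hz : ∀ᵐ x ∂(ν l), ENNReal.ofReal (f₀ x) = 0 := by
          filter_upwards [hconc, hnB] with x hx hxB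
          have hxT : π x ∈ A n := hx ▸ hlA
          have h1 : ¬ (0 < f₀ x) := fun h => hxB ⟨hxT, h⟩
          have h2 : f₀ x = 0 := le_antisymm (not_lt.mp h1) (hnn x)
          simp [h2]
        have hI0 : ∫⁻ x, ENNReal.ofReal (f₀ x) ∂(ν l) = 0 :=
          (lintegral_eq_zero_iff'
            ((ENNReal.measurable_ofReal.comp hmeas)).aemeasurable).mpr hz
        have hcl : ENNReal.ofReal c ≤ ∫⁻ x, ENNReal.ofReal (f₀ x) ∂(ν l) := hlA
        rw [hI0] at hcl
        simp only [nonpos_iff_eq_zero, ENNReal.ofReal_eq_zero] at hcl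
        linarith
      have h0 := ae_iff.mp hcontr
      simp only [Classical.not_not] at h0
      exact hA h0
    -- strict inequality of integrals of p-th powers
    have hptop : ENNReal.ofReal p ≠ ∞ := ENNReal.ofReal_ne_top
    have hpne : ENNReal.ofReal p ≠ 0 := by
      simp [ENNReal.ofReal_eq_zero, not_le, hp0]
    have htoReal : (ENNReal.ofReal p).toReal = p := ENNReal.toReal_ofReal hp0.le
    have hrw : ∀ (g : X → ℝ), (∀ x, 0 ≤ g x) →
        (∫⁻ x, ‖g x‖ₑ ^ p ∂μ) = ∫⁻ x, ENNReal.ofReal (g x) ^ p ∂μ := by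
      intro g hg
      apply lintegral_congr
      intro x
      rw [← ofReal_norm, Real.norm_of_nonneg (hg x)]
    have hfin : ∫⁻ x, ENNReal.ofReal (f₀ x) ^ p ∂μ ≠ ∞ := by
      intro h
      have h0 := hmem.eLpNorm_lt_top
      rw [eLpNorm_eq_lintegral_rpow_enorm_toReal hpne hptop, htoReal, hrw f₀ hnn, h,
        ENNReal.top_rpow_of_pos (by positivity : (0:ℝ) < 1/p)] at h0
      exact lt_irrefl _ h0
    have hflt : ∫⁻ x, ENNReal.ofReal (f x) ^ p ∂μ < ∫⁻ x, ENNReal.ofReal (f₀ x) ^ p ∂μ := by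
      apply lintegral_strict_mono_of_ae_le_of_ae_lt_on
        ((ENNReal.measurable_ofReal.comp hmeas).pow_const _).aemeasurable
      · intro h
        apply hfin
        rw [eq_top_iff, ← h]
        apply lintegral_mono
        intro x
        exact ENNReal.rpow_le_rpow (ENNReal.ofReal_le_ofReal (hfle x)) hp0.le
      · exact Filter.Eventually.of_forall fun x =>
          ENNReal.rpow_le_rpow (ENNReal.ofReal_le_ofReal (hfle x)) hp0.le
      · exact hBpos
      · refine Filter.Eventually.of_forall fun x hx => ?_
        obtain ⟨hxT, hx0⟩ := hx
        have hlt : f x < f₀ x := by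
          rw [hfdef]; simp only [Set.mem_preimage] at hxT
          simp only [hxT, if_true]
          exact div_lt_self hx0 hc1
        exact ENNReal.rpow_lt_rpow ((ENNReal.ofReal_lt_ofReal_iff hx0).mpr hlt) hp0
    -- conclude strict eLpNorm inequality
    have hcmp : eLpNorm f (ENNReal.ofReal p) μ < eLpNorm f₀ (ENNReal.ofReal p) μ := by
      rw [eLpNorm_eq_lintegral_rpow_enorm_toReal hpne hptop,
        eLpNorm_eq_lintegral_rpow_enorm_toReal hpne hptop, htoReal]
      rw [hrw f hfnn, hrw f₀ hnn]
      exact ENNReal.rpow_lt_rpow hflt (by positivity)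
    have hle : pModulus μ ν π p Set.univ ≤ eLpNorm f (ENNReal.ofReal p) μ :=
      iInf₂_le f hfadm
    rw [← hext] at hle
    exact absurd (lt_of_le_of_lt hle hcmp) (lt_irrefl _)
  -- from hmain, deduce a.e. leaf integral ≤ 1
  have hle : ∀ᵐ l ∂(μ.map π), (∫⁻ x, ENNReal.ofReal (f₀ x) ∂(ν l)) ≤ 1 := by
    have hsub : {l | ¬ (∫⁻ x, ENNReal.ofReal (f₀ x) ∂(ν l)) ≤ 1} ⊆ ⋃ n, A n := by
      intro l hl
      simp only [Set.mem_setOf_eq, not_le] at hl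
      by_cases htop : (∫⁻ x, ENNReal.ofReal (f₀ x) ∂(ν l)) = ∞
      · exact Set.mem_iUnion.mpr ⟨0, by rw [hAdef]; simp [htop]⟩
      · have h1 : 1 < (∫⁻ x, ENNReal.ofReal (f₀ x) ∂(ν l)).toReal := by
          rw [← ENNReal.toReal_one]
          exact ENNReal.toReal_strict_mono htop hl
        obtain ⟨n, hn⟩ := exists_nat_one_div_lt
          (by linarith : (0:ℝ) < (∫⁻ x, ENNReal.ofReal (f₀ x) ∂(ν l)).toReal - 1)
        refine Set.mem_iUnion.mpr ⟨n, ?_⟩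
        rw [hAdef]
        simp only [Set.mem_setOf_eq]
        apply ENNReal.ofReal_le_of_le_toReal
        rw [one_div] at hn
        linarith
    rw [ae_iff]
    exact measure_mono_null hsub (measure_iUnion_null hmain)
  filter_upwards [hadm, hle] with l h1 h2
  exact le_antisymm h2 (h1 trivial)
end

section
/- If f₀ is an extremal function for the p-modulus mod_p(F), then f₀ > 0 μ-almost everywhere on X. -/
open MeasureTheory ENNReal

/-- `eLpNorm` of a nonnegative function in terms of a Lebesgue integral. -/
lemma eLpNorm_nonneg_repr {X : Type*} [MeasurableSpace X] (μ : MeasureTheory.Measure X)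
    {p : ℝ} (hp : 0 < p) (f : X → ℝ) (hf : ∀ x, 0 ≤ f x) :
    eLpNorm f (ENNReal.ofReal p) μ
      = (∫⁻ x, (ENNReal.ofReal (f x)) ^ p ∂μ) ^ (1 / p) := by
  rw [eLpNorm_eq_lintegral_rpow_enorm_toReal (by simp [ENNReal.ofReal_eq_zero, not_le, hp])
    ENNReal.ofReal_ne_top]
  simp_rw [ENNReal.toReal_ofReal hp.le, Real.enorm_eq_ofReal (hf _)]

/-- Under the abstract coarea formula, an extremal function for the p-modulus is
positive μ-almost everywhere. -/
theorem statement2 {X Λ : Type*} [MeasurableSpace X] [MeasurableSpace Λ]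
    (μ : MeasureTheory.Measure X) [SigmaFinite μ] (ν : Λ → MeasureTheory.Measure X)
    (π : X → Λ) (hπ : Measurable π) (hν : Measurable ν)
    (hK : ∀ l : Λ, ν l {x | π x ≠ l} = 0)
    (hH : ∀ N : Set X, MeasurableSet N → μ N = 0 → ∀ᵐ l ∂(μ.map π), ν l N = 0)
    (p : ℝ) (hp : 1 < p)
    -- the abstract coarea formula
    (σ : MeasureTheory.Measure Λ) [SigmaFinite σ]
    (c₁ c₂ : ℝ) (hc₁ : 0 < c₁) (hc₁₂ : c₁ ≤ c₂)
    (w : X → ℝ) (hw : Measurable w) (hw₁ : ∀ x, c₁ ≤ w x) (hw₂ : ∀ x, w x ≤ c₂)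
    (hcoarea : ∀ h : X → ℝ≥0∞, Measurable h →
      ∫⁻ x, h x ∂μ = ∫⁻ l, (∫⁻ x, h x * ENNReal.ofReal (w x) ∂(ν l)) ∂σ)
    (f₀ : X → ℝ) (hf₀ : IsExtremal μ ν π p f₀) :
    ∀ᵐ x ∂μ, 0 < f₀ x := by
  classical
  by_contra hcon
  obtain ⟨⟨hmf₀, hnn, hLp, hadm⟩, hext⟩ := hf₀
  have hp0 : (0:ℝ) < p := lt_trans one_pos hp
  -- the zero set of f₀ has positive measure
  have hZne : μ {x | f₀ x ≤ 0} ≠ 0 := by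
    intro h0
    exact hcon (ae_iff.mpr (by simpa [not_lt] using h0))
  have hZm : MeasurableSet {x | f₀ x ≤ 0} := measurableSet_le hmf₀ measurable_const
  obtain ⟨Z', hZ'm, hZ'sub, hZ'pos, hZ'fin⟩ :=
    MeasureTheory.Measure.exists_subset_measure_lt_top hZm (pos_iff_ne_zero.mpr hZne)
  have hZ'zero : ∀ x ∈ Z', f₀ x = 0 := fun x hx => le_antisymm (hZ'sub hx) (hnn x)
  -- the leaf measure of Z'
  have hg : Measurable fun l => ν l Z' := (Measure.measurable_coe hZ'm).comp hν
  set B : Set X := Z' ∩ {x | ν (π x) Z' = 0} with hBdef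
  have hBm : MeasurableSet B :=
    hZ'm.inter ((hg.comp hπ) (measurableSet_singleton 0))
  -- every leaf gives B measure zero
  have hνB : ∀ l, ν l B = 0 := by
    intro l
    by_cases h0 : ν l Z' = 0
    · exact measure_mono_null Set.inter_subset_left h0
    · refine measure_mono_null ?_ (hK l)
      rintro x ⟨hxZ, hx0⟩ rfl
      exact h0 hx0
  -- hence μ B = 0 by the coarea formula
  have hμB : μ B = 0 := by
    have h1 := hcoarea (B.indicator 1) (measurable_one.indicator hBm)
    rw [lintegral_indicator_one hBm] at h1
    rw [h1]
    have h2 : ∀ l, (∫⁻ x, B.indicator 1 x * ENNReal.ofReal (w x) ∂(ν l)) = 0 := by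
      intro l
      have h3 : ∀ x, B.indicator (1 : X → ℝ≥0∞) x * ENNReal.ofReal (w x)
          = B.indicator (fun y => ENNReal.ofReal (w y)) x := by
        intro x; by_cases hx : x ∈ B <;> simp [hx]
      simp_rw [h3]
      rw [lintegral_indicator hBm]
      exact setLIntegral_measure_zero _ _ (hνB l)
    simp_rw [h2, lintegral_zero]
  -- find a level such that the set of leaves meeting Z' substantially has positive measure
  have hBsub : Z' \ B ⊆ ⋃ n : ℕ, (Z' ∩ π ⁻¹' {l | ((n:ℝ≥0∞)+1)⁻¹ ≤ ν l Z'}) := by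
    rintro x ⟨hxZ, hxB⟩
    have h0 : ν (π x) Z' ≠ 0 := fun h => hxB ⟨hxZ, h⟩
    obtain ⟨n, hn⟩ := ENNReal.exists_inv_nat_lt h0
    refine Set.mem_iUnion.mpr ⟨n, hxZ, ?_⟩
    exact le_trans (ENNReal.inv_le_inv.mpr (le_self_add)) hn.le
  have hZB : μ (Z' \ B) ≠ 0 := by
    rw [measure_diff_null hμB]; exact hZ'pos.ne'
  obtain ⟨n, hn⟩ : ∃ n : ℕ, μ (Z' ∩ π ⁻¹' {l | ((n:ℝ≥0∞)+1)⁻¹ ≤ ν l Z'}) ≠ 0 := by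
    by_contra hall
    push_neg at hall
    exact hZB (measure_mono_null hBsub (measure_iUnion_null hall))
  set δ : ℝ≥0∞ := ((n:ℝ≥0∞)+1)⁻¹ with hδdef
  set A : Set Λ := {l | δ ≤ ν l Z'} with hAdef
  have hAm : MeasurableSet A := hg measurableSet_Ici
  set P : Set X := π ⁻¹' A with hPdef
  have hPm : MeasurableSet P := hπ hAm
  set m : ℝ≥0∞ := μ (Z' ∩ P) with hmdef
  have hm0 : m ≠ 0 := hn
  have hmfin : m < ∞ := lt_of_le_of_lt (measure_mono Set.inter_subset_left) hZ'fin
  -- integrand measurability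
  have hg₀ : Measurable fun x => (ENNReal.ofReal (f₀ x)) ^ p :=
    ENNReal.continuous_rpow_const.measurable.comp (ENNReal.measurable_ofReal.comp hmf₀)
  set I : ℝ≥0∞ := ∫⁻ x in P, (ENNReal.ofReal (f₀ x)) ^ p ∂μ with hIdef
  set R : ℝ≥0∞ := ∫⁻ x in Pᶜ, (ENNReal.ofReal (f₀ x)) ^ p ∂μ with hRdef
  have hsplit : I + R = ∫⁻ x, (ENNReal.ofReal (f₀ x)) ^ p ∂μ := lintegral_add_compl _ hPm
  have hJfin : (∫⁻ x, (ENNReal.ofReal (f₀ x)) ^ p ∂μ) ≠ ∞ := by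
    intro hT
    have := hLp.2
    rw [eLpNorm_nonneg_repr μ hp0 f₀ hnn, hT,
      ENNReal.top_rpow_of_pos (by positivity)] at this
    exact (lt_irrefl _ this)
  -- leaves are fibers a.e.
  have hfib : ∀ l, ∀ᵐ x ∂(ν l), π x = l := by
    intro l
    rw [ae_iff]
    exact hK l
  have hmapA : (μ.map π) A = μ P := Measure.map_apply hπ hAm
  by_cases hI : I = 0
  · -- then f₀ vanishes a.e. on P, contradicting admissibility over A
    have hae0 : ∀ᵐ x ∂μ, x ∈ P → (ENNReal.ofReal (f₀ x)) ^ p = 0 :=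
      (setLIntegral_eq_zero_iff hPm hg₀).mp hI
    set N : Set X := P ∩ {x | 0 < f₀ x} with hNdef
    have hNm : MeasurableSet N := hPm.inter (measurableSet_lt measurable_const hmf₀)
    have hμN : μ N = 0 := by
      refine measure_mono_null ?_ (ae_iff.mp hae0)
      rintro x ⟨hxP, hxf⟩
      simp only [Set.mem_setOf_eq, not_forall]
      refine ⟨hxP, ?_⟩
      exact (ENNReal.rpow_pos (ENNReal.ofReal_pos.mpr hxf) ENNReal.ofReal_ne_top).ne'
    have hcomb := (hH N hNm hμN).and hadm
    have hnotA : ∀ᵐ l ∂(μ.map π), l ∉ A := by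
      refine hcomb.mono ?_
      rintro l ⟨h1, h2⟩ hlA
      have h3 : 1 ≤ ∫⁻ x, ENNReal.ofReal (f₀ x) ∂(ν l) := h2 (Set.mem_univ l)
      have h4 : ∀ᵐ x ∂(ν l), ENNReal.ofReal (f₀ x) = 0 := by
        have hxN : ∀ᵐ x ∂(ν l), x ∉ N := measure_eq_zero_iff_ae_notMem.mp h1
        filter_upwards [hxN, hfib l] with x hx1 hx2
        rw [ENNReal.ofReal_eq_zero]
        by_contra hne
        push_neg at hne
        exact hx1 ⟨by rw [Set.mem_preimage, hx2]; exact hlA, hne⟩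
      rw [lintegral_congr_ae h4, lintegral_zero] at h3
      simp at h3
    have hA0 : (μ.map π) A = 0 := by
      have := ae_iff.mp hnotA
      simpa using this
    rw [hmapA] at hA0
    exact hm0 (measure_mono_null Set.inter_subset_right hA0)
  · -- construct a strictly better admissible competitor
    have hIfin : I ≠ ∞ := by
      intro hT
      exact hJfin (by rw [← hsplit, hT]; simp)
    set c : ℝ := (n:ℝ) + 1 with hcdef
    have hc0 : (0:ℝ) < c := by positivity
    have hcδ : ENNReal.ofReal c * δ = 1 := by
      have h1 : ENNReal.ofReal c = (n:ℝ≥0∞) + 1 := by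
        rw [hcdef, ENNReal.ofReal_add (Nat.cast_nonneg n) zero_le_one,
          ENNReal.ofReal_natCast, ENNReal.ofReal_one]
      rw [h1, hδdef]
      exact ENNReal.mul_inv_cancel (by simp) (by simp)
    set K : ℝ≥0∞ := (ENNReal.ofReal c) ^ p * m with hKdef
    have hK0 : K ≠ 0 := by
      apply mul_ne_zero _ hm0
      exact (ENNReal.rpow_pos (ENNReal.ofReal_pos.mpr hc0) ENNReal.ofReal_ne_top).ne'
    have hKfin : K ≠ ∞ := ENNReal.mul_ne_top
      (ENNReal.rpow_lt_top_of_nonneg hp0.le ENNReal.ofReal_ne_top).ne hmfin.ne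
    have hIK : (0:ℝ≥0∞) < I / K := ENNReal.div_pos hI hKfin
    set u : ℝ≥0∞ := min (I / K) 1 with hudef
    have hu0 : u ≠ 0 := (lt_min hIK one_pos).ne'
    have huT : u ≠ ∞ := ne_top_of_le_ne_top one_ne_top (min_le_right _ _)
    have hur : 0 < u.toReal := ENNReal.toReal_pos hu0 huT
    set s : ℝ := u.toReal / 2 with hsdef
    have hs0 : 0 < s := by positivity
    have hs1 : s < 1 := by
      have h1 : u.toReal ≤ 1 := by
        rw [← ENNReal.toReal_one]
        exact ENNReal.toReal_mono one_ne_top (min_le_right _ _)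
      rw [hsdef]; linarith
    have hofs : ENNReal.ofReal s < u := by
      rw [← ENNReal.ofReal_toReal huT]
      exact ENNReal.ofReal_lt_ofReal_iff'.mpr ⟨by rw [hsdef]; linarith, hur⟩
    have hp1 : (0:ℝ) < p - 1 := by linarith
    set t : ℝ := s ^ (1/(p-1)) with htdef
    have ht0 : 0 < t := Real.rpow_pos_of_pos hs0 _
    have ht1 : t < 1 := Real.rpow_lt_one hs0.le hs1 (by positivity)
    have htp : t ^ (p-1) = s := by
      rw [htdef, ← Real.rpow_mul hs0.le, one_div_mul_cancel hp1.ne', Real.rpow_one]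
    have h1t : (0:ℝ) ≤ 1 - t := by linarith
    have hindnn : ∀ x, 0 ≤ Z'.indicator (fun _ => (1:ℝ)) x :=
      fun x => Set.indicator_nonneg (fun _ _ => zero_le_one) x
    -- the competitor
    set f : X → ℝ := fun x =>
      if x ∈ P then (1-t) * f₀ x + t * c * Z'.indicator (fun _ => (1:ℝ)) x else f₀ x with hfdef
    have hfP : ∀ x ∈ P, f x = (1-t) * f₀ x + t * c * Z'.indicator (fun _ => (1:ℝ)) x :=
      fun x hx => if_pos hx
    have hfPc : ∀ x ∉ P, f x = f₀ x := fun x hx => if_neg hx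
    have hfm : Measurable f :=
      Measurable.ite hPm
        ((measurable_const.mul hmf₀).add
          (measurable_const.mul (measurable_const.indicator hZ'm))) hmf₀
    have hfnn : ∀ x, 0 ≤ f x := by
      intro x
      by_cases hx : x ∈ P
      · rw [hfP x hx]
        exact add_nonneg (mul_nonneg h1t (hnn x))
          (mul_nonneg (mul_nonneg ht0.le hc0.le) (hindnn x))
      · rw [hfPc x hx]; exact hnn x
    have hofP : ∀ x, ENNReal.ofReal ((1-t) * f₀ x + t * c * Z'.indicator (fun _ => (1:ℝ)) x)
        = ENNReal.ofReal (1-t) * ENNReal.ofReal (f₀ x)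
          + ENNReal.ofReal (t*c) * Z'.indicator (1 : X → ℝ≥0∞) x := by
      intro x
      rw [ENNReal.ofReal_add (mul_nonneg h1t (hnn x))
          (mul_nonneg (mul_nonneg ht0.le hc0.le) (hindnn x)),
        ENNReal.ofReal_mul h1t]
      congr 1
      by_cases hx : x ∈ Z'
      · simp [Set.indicator_of_mem hx]
      · simp [Set.indicator_of_notMem hx]
    -- admissibility of the competitor
    have hone : ENNReal.ofReal (1-t) + ENNReal.ofReal t = 1 := by
      rw [← ENNReal.ofReal_add h1t ht0.le]; norm_num
    have hadm' : ∀ᵐ l ∂(μ.map π), l ∈ (Set.univ : Set Λ) →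
        1 ≤ ∫⁻ x, ENNReal.ofReal (f x) ∂(ν l) := by
      filter_upwards [hadm] with l hl _
      have hl1 : 1 ≤ ∫⁻ x, ENNReal.ofReal (f₀ x) ∂(ν l) := hl (Set.mem_univ l)
      by_cases hlA : l ∈ A
      · have hae : ∀ᵐ x ∂(ν l), ENNReal.ofReal (f x)
            = ENNReal.ofReal (1-t) * ENNReal.ofReal (f₀ x)
              + ENNReal.ofReal (t*c) * Z'.indicator (1 : X → ℝ≥0∞) x := by
          filter_upwards [hfib l] with x hx
          have hxP : x ∈ P := by rw [hPdef, Set.mem_preimage, hx]; exact hlA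
          rw [hfP x hxP]; exact hofP x
        rw [lintegral_congr_ae hae,
          lintegral_add_left (f := fun x => ENNReal.ofReal (1-t) * ENNReal.ofReal (f₀ x))
            (measurable_const.mul hmf₀.ennreal_ofReal),
          lintegral_const_mul _ hmf₀.ennreal_ofReal,
          lintegral_const_mul _ (measurable_one.indicator hZ'm),
          lintegral_indicator_one hZ'm]
        calc (1:ℝ≥0∞) = ENNReal.ofReal (1-t) * 1 + ENNReal.ofReal (t*c) * δ := by
              rw [mul_one, ENNReal.ofReal_mul ht0.le, mul_assoc, hcδ, mul_one, hone]
          _ ≤ _ := add_le_add (mul_le_mul_right hl1 _) (mul_le_mul_right hlA _)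
      · have hae : ∀ᵐ x ∂(ν l), ENNReal.ofReal (f x) = ENNReal.ofReal (f₀ x) := by
          filter_upwards [hfib l] with x hx
          have hxP : x ∉ P := by rw [hPdef, Set.mem_preimage, hx]; exact hlA
          rw [hfPc x hxP]
        rw [lintegral_congr_ae hae]; exact hl1
    -- the L^p norm of the competitor
    have hPc : ∫⁻ x in Pᶜ, (ENNReal.ofReal (f x)) ^ p ∂μ = R := by
      rw [hRdef]
      refine setLIntegral_congr_fun hPm.compl ?_
      intro x hx
      simp only []
      rw [hfPc x hx]
    have hPZ : ∫⁻ x in P ∩ Z', (ENNReal.ofReal (f x)) ^ p ∂μ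
        = (ENNReal.ofReal (t*c)) ^ p * m := by
      have heq : ∀ x ∈ P ∩ Z', (ENNReal.ofReal (f x)) ^ p = (ENNReal.ofReal (t*c)) ^ p := by
        rintro x ⟨hxP, hxZ⟩
        rw [hfP x hxP, hZ'zero x hxZ, Set.indicator_of_mem hxZ]
        norm_num
      rw [setLIntegral_congr_fun (hPm.inter hZ'm) heq, setLIntegral_const]
      rw [hmdef, Set.inter_comm]
    have hIdiff : ∫⁻ x in P \ Z', (ENNReal.ofReal (f₀ x)) ^ p ∂μ = I := by
      have h0 : ∫⁻ x in P ∩ Z', (ENNReal.ofReal (f₀ x)) ^ p ∂μ = 0 := by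
        have heq : ∀ x ∈ P ∩ Z', (ENNReal.ofReal (f₀ x)) ^ p = 0 := by
          rintro x ⟨hxP, hxZ⟩
          rw [hZ'zero x hxZ, ENNReal.ofReal_zero, ENNReal.zero_rpow_of_pos hp0]
        rw [setLIntegral_congr_fun (hPm.inter hZ'm) heq]
        simp
      have h1 := lintegral_inter_add_diff (fun x => (ENNReal.ofReal (f₀ x)) ^ p) P hZ'm (μ := μ)
      rw [h0, zero_add] at h1
      exact h1
    have hPdiff : ∫⁻ x in P \ Z', (ENNReal.ofReal (f x)) ^ p ∂μ
        = (ENNReal.ofReal (1-t)) ^ p * I := by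
      have heq : ∀ x ∈ P \ Z', (ENNReal.ofReal (f x)) ^ p
          = (ENNReal.ofReal (1-t)) ^ p * (ENNReal.ofReal (f₀ x)) ^ p := by
        rintro x ⟨hxP, hxZ⟩
        rw [hfP x hxP, Set.indicator_of_notMem hxZ, mul_zero, add_zero,
          ENNReal.ofReal_mul h1t, ENNReal.mul_rpow_of_nonneg _ _ hp0.le]
      rw [setLIntegral_congr_fun (hPm.diff hZ'm) heq,
        lintegral_const_mul _ hg₀, hIdiff]
    have hJf : ∫⁻ x, (ENNReal.ofReal (f x)) ^ p ∂μ
        = ((ENNReal.ofReal (t*c)) ^ p * m + (ENNReal.ofReal (1-t)) ^ p * I) + R := by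
      rw [← lintegral_add_compl (fun x => (ENNReal.ofReal (f x)) ^ p) hPm, hPc]
      congr 1
      rw [← lintegral_inter_add_diff (fun x => (ENNReal.ofReal (f x)) ^ p) P hZ'm, hPZ, hPdiff]
    -- the strict inequality between the two integrals
    have hofs' : ENNReal.ofReal s * K < I :=
      ENNReal.mul_lt_of_lt_div (lt_of_lt_of_le hofs (min_le_left _ _))
    have hts : (ENNReal.ofReal t) ^ (p-1) = ENNReal.ofReal s := by
      rw [ENNReal.ofReal_rpow_of_pos ht0, htp]
    have htpow : (ENNReal.ofReal t) ^ p = ENNReal.ofReal s * ENNReal.ofReal t := by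
      have hpe : p = (p-1) + 1 := by ring
      rw [hpe, ENNReal.rpow_add _ _ (ENNReal.ofReal_pos.mpr ht0).ne' ENNReal.ofReal_ne_top,
        hts, ENNReal.rpow_one]
    have hterm1 : (ENNReal.ofReal (t*c)) ^ p * m < ENNReal.ofReal t * I := by
      have he : (ENNReal.ofReal (t*c)) ^ p * m = (ENNReal.ofReal s * K) * ENNReal.ofReal t := by
        rw [ENNReal.ofReal_mul ht0.le, ENNReal.mul_rpow_of_nonneg _ _ hp0.le, htpow, hKdef]
        ring
      rw [he, mul_comm (ENNReal.ofReal t) I]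
      exact ENNReal.mul_lt_mul_left (ENNReal.ofReal_pos.mpr ht0).ne' ENNReal.ofReal_ne_top hofs'
    have hterm2 : (ENNReal.ofReal (1-t)) ^ p * I ≤ I - ENNReal.ofReal t * I := by
      have h1 : (ENNReal.ofReal (1-t)) ^ p ≤ 1 - ENNReal.ofReal t := by
        calc (ENNReal.ofReal (1-t)) ^ p ≤ (ENNReal.ofReal (1-t)) ^ (1:ℝ) :=
              ENNReal.rpow_le_rpow_of_exponent_ge (ENNReal.ofReal_le_one.mpr (by linarith)) hp.le
          _ = 1 - ENNReal.ofReal t := by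
              rw [ENNReal.rpow_one, ENNReal.ofReal_sub 1 ht0.le, ENNReal.ofReal_one]
      calc (ENNReal.ofReal (1-t)) ^ p * I ≤ (1 - ENNReal.ofReal t) * I := mul_le_mul_left h1 I
        _ = I - ENNReal.ofReal t * I := by rw [ENNReal.sub_mul (fun _ _ => hIfin), one_mul]
    have htI : ENNReal.ofReal t * I ≤ I := by
      calc ENNReal.ofReal t * I ≤ 1 * I := mul_le_mul_left (ENNReal.ofReal_le_one.mpr ht1.le) I
        _ = I := one_mul I
    have hsum : (ENNReal.ofReal (t*c)) ^ p * m + (ENNReal.ofReal (1-t)) ^ p * I < I := by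
      calc (ENNReal.ofReal (t*c)) ^ p * m + (ENNReal.ofReal (1-t)) ^ p * I
          ≤ (ENNReal.ofReal (t*c)) ^ p * m + (I - ENNReal.ofReal t * I) := add_le_add_right hterm2 _
        _ < ENNReal.ofReal t * I + (I - ENNReal.ofReal t * I) :=
            ENNReal.add_lt_add_right (ne_top_of_le_ne_top hIfin tsub_le_self) hterm1
        _ = I := add_tsub_cancel_of_le htI
    have hRfin : R ≠ ∞ := by
      intro hT
      exact hJfin (by rw [← hsplit, hT]; simp)
    have hJlt : ∫⁻ x, (ENNReal.ofReal (f x)) ^ p ∂μ < ∫⁻ x, (ENNReal.ofReal (f₀ x)) ^ p ∂μ := by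
      rw [hJf, ← hsplit]
      exact ENNReal.add_lt_add_right hRfin hsum
    -- conclusion
    have hfLp : MemLp f (ENNReal.ofReal p) μ := by
      refine ⟨hfm.aestronglyMeasurable, ?_⟩
      rw [eLpNorm_nonneg_repr μ hp0 f hfnn]
      exact ENNReal.rpow_lt_top_of_nonneg (by positivity)
        (hJlt.trans (lt_top_iff_ne_top.mpr hJfin)).ne
    have hfadm : IsAdmissible μ ν π p Set.univ f := ⟨hfm, hfnn, hfLp, hadm'⟩
    have hle : pModulus μ ν π p Set.univ ≤ eLpNorm f (ENNReal.ofReal p) μ := iInf₂_le f hfadm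
    have hlt : eLpNorm f (ENNReal.ofReal p) μ < eLpNorm f₀ (ENNReal.ofReal p) μ := by
      rw [eLpNorm_nonneg_repr μ hp0 f hfnn, eLpNorm_nonneg_repr μ hp0 f₀ hnn]
      exact ENNReal.rpow_lt_rpow hJlt (by positivity)
    rw [hext] at hlt
    exact absurd (lt_of_le_of_lt hle hlt) (lt_irrefl _)
end

section
/- Assume there exists an extremal function for the p-modulus mod_p(F). Then for every φ ∈ L^p(μ) one has ∫_X |φ| dν_λ < ∞ for π_*μ-almost every λ ∈ Λ (i.e. φ is integrable over almost every leaf). -/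
open MeasureTheory ENNReal

/-- If an extremal function for the p-modulus exists, then every φ ∈ L^p(μ) is
integrable over π_*μ-almost every leaf. -/
theorem statement3 {X Λ : Type*} [MeasurableSpace X] [MeasurableSpace Λ]
    (μ : MeasureTheory.Measure X) [SigmaFinite μ] (ν : Λ → MeasureTheory.Measure X)
    (π : X → Λ) (hπ : Measurable π) (hν : Measurable ν)
    (hK : ∀ l : Λ, ν l {x | π x ≠ l} = 0)
    (hH : ∀ N : Set X, MeasurableSet N → μ N = 0 → ∀ᵐ l ∂(μ.map π), ν l N = 0)
    (p : ℝ) (hp : 1 < p)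
    (hext : ∃ f₀, IsExtremal μ ν π p f₀) :
    ∀ φ : X → ℝ, Measurable φ → MemLp φ (ENNReal.ofReal p) μ →
      ∀ᵐ l ∂(μ.map π), ∫⁻ x, ENNReal.ofReal |φ x| ∂(ν l) < ⊤ := by
  intro φ hφmeas hφmem
  classical
  obtain ⟨f₀, ⟨hf₀meas, hf₀pos, hf₀mem, hf₀adm⟩, hf₀ext⟩ := hext
  have hp0 : (0:ℝ) < p := lt_trans one_pos hp
  have hpne : (ENNReal.ofReal p) ≠ 0 := by
    simp [ENNReal.ofReal_eq_zero, not_le, hp0]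
  have hpt : (ENNReal.ofReal p) ≠ ⊤ := ENNReal.ofReal_ne_top
  have hptr : (ENNReal.ofReal p).toReal = p := ENNReal.toReal_ofReal hp0.le
  set Φ : X → ℝ≥0∞ := fun x => ENNReal.ofReal |φ x| with hΦdef
  have hΦmeas : Measurable Φ := ENNReal.measurable_ofReal.comp hφmeas.abs
  have hImeas : Measurable fun l => ∫⁻ x, Φ x ∂ν l :=
    (Measure.measurable_lintegral hΦmeas).comp hν
  set S : Set Λ := {l | ∫⁻ x, Φ x ∂ν l = ⊤} with hSdef
  have hSmeas : MeasurableSet S := hImeas (measurableSet_singleton ⊤)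
  -- it suffices to show `(μ.map π) S = 0`
  suffices hS0 : (μ.map π) S = 0 by
    rw [MeasureTheory.ae_iff]
    convert hS0 using 2
    ext l
    simp [hSdef, lt_top_iff_ne_top]
  by_contra hS
  set T : Set X := π ⁻¹' S with hTdef
  have hTmeas : MeasurableSet T := hπ hSmeas
  -- norm-power integrals
  set I : (X → ℝ) → ℝ≥0∞ := fun f => ∫⁻ x, (‖f x‖₊ : ℝ≥0∞) ^ p ∂μ with hIdef
  have heLp : ∀ f : X → ℝ, eLpNorm f (ENNReal.ofReal p) μ = (I f) ^ (1/p) := by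
    intro f
    rw [eLpNorm_eq_lintegral_rpow_enorm_toReal hpne hpt, hptr]; rfl
  have hIf₀ : I f₀ < ⊤ := by
    have := hf₀mem.eLpNorm_lt_top
    rw [heLp f₀] at this
    exact (ENNReal.rpow_lt_top_iff_of_pos (by positivity)).mp this
  have hIφ : I φ < ⊤ := by
    have := hφmem.eLpNorm_lt_top
    rw [heLp φ] at this
    exact (ENNReal.rpow_lt_top_iff_of_pos (by positivity)).mp this
  set c : ℝ≥0∞ := ∫⁻ x in T, (‖f₀ x‖₊ : ℝ≥0∞) ^ p ∂μ with hcdef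
  set A : ℝ≥0∞ := ∫⁻ x in T, (‖φ x‖₊ : ℝ≥0∞) ^ p ∂μ with hAdef
  have hf₀pm : Measurable fun x => ((‖f₀ x‖₊ : ℝ≥0∞)) ^ p := hf₀meas.enorm.pow_const _
  have hφpm : Measurable fun x => ((‖φ x‖₊ : ℝ≥0∞)) ^ p := hφmeas.enorm.pow_const _
  have hA : A ≠ ⊤ := (lt_of_le_of_lt (setLIntegral_le_lintegral _ _) hIφ).ne
  -- c ≠ 0
  have hc : c ≠ 0 := by
    intro hc0
    have hae : ∀ᵐ x ∂μ.restrict T, (fun x => ((‖f₀ x‖₊ : ℝ≥0∞)) ^ p) x = 0 :=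
      (lintegral_eq_zero_iff hf₀pm).mp hc0
    have hae' : ∀ᵐ x ∂μ.restrict T, f₀ x = 0 := by
      filter_upwards [hae] with x hx
      have : (‖f₀ x‖₊ : ℝ≥0∞) = 0 := by
        by_contra hne
        exact (ENNReal.rpow_pos (pos_iff_ne_zero.mpr hne) ENNReal.coe_ne_top).ne' hx
      simpa using this
    set N : Set X := {x | f₀ x ≠ 0} ∩ T with hNdef
    have hNmeas : MeasurableSet N :=
      ((measurableSet_singleton (0:ℝ)).preimage hf₀meas).compl.inter hTmeas
    have hμN : μ N = 0 := by
      have hm : MeasurableSet {a : X | ¬ f₀ a = 0} :=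
        ((measurableSet_singleton (0:ℝ)).preimage hf₀meas).compl
      have := MeasureTheory.ae_iff.mp hae'
      rw [Measure.restrict_apply hm] at this
      exact this
    have hνN := hH N hNmeas hμN
    have hfreq : ∃ᵐ l ∂(μ.map π), l ∈ S := frequently_ae_mem_iff.mpr hS
    obtain ⟨l, hlS, hl1, hlN⟩ := (hfreq.and_eventually (hf₀adm.and hνN)).exists
    have hl1' := hl1 (Set.mem_univ l)
    have haeπ : ∀ᵐ x ∂ν l, π x = l := by
      rw [MeasureTheory.ae_iff]
      exact hK l
    have haeN : ∀ᵐ x ∂ν l, x ∉ N := measure_eq_zero_iff_ae_notMem.mp hlN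
    have : ∫⁻ x, ENNReal.ofReal (f₀ x) ∂ν l = 0 := by
      rw [lintegral_eq_zero_iff hf₀meas.ennreal_ofReal]
      filter_upwards [haeπ, haeN] with x hx1 hx2
      have hxT : x ∈ T := by simp [hTdef, hx1, hlS]
      have : f₀ x = 0 := by
        by_contra hne
        exact hx2 ⟨hne, hxT⟩
      simp [this]
    rw [this] at hl1'
    simp at hl1'
  -- choose ε
  obtain ⟨r, hr0, hrlt⟩ := ENNReal.lt_iff_exists_nnreal_btwn.mp
    (ENNReal.div_pos hc (by simp [hA]) : (0:ℝ≥0∞) < c / (A + 1))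
  have hrA : (r : ℝ≥0∞) * A < c := by
    calc (r : ℝ≥0∞) * A ≤ (r : ℝ≥0∞) * (A + 1) := by
          exact mul_le_mul_right (le_add_right le_rfl) _
      _ < c := ENNReal.mul_lt_of_lt_div hrlt
  have hr0' : (0:ℝ) < (r:ℝ) := by exact_mod_cast hr0
  set ε : ℝ := (r:ℝ) ^ (1/p) with hεdef
  have hε0 : 0 < ε := Real.rpow_pos_of_pos hr0' _
  have hεp : ENNReal.ofReal ε ^ p = (r : ℝ≥0∞) := by
    rw [hεdef, ← ENNReal.ofReal_rpow_of_pos hr0', ← ENNReal.rpow_mul,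
      one_div_mul_cancel hp0.ne', ENNReal.rpow_one, ENNReal.ofReal_coe_nnreal]
  -- the competitor function
  set h : X → ℝ := fun x => if x ∈ T then ε * |φ x| else f₀ x with hhdef
  have hhmeas : Measurable h :=
    Measurable.ite hTmeas (measurable_const.mul hφmeas.abs) hf₀meas
  have hhpos : ∀ x, 0 ≤ h x := by
    intro x
    by_cases hx : x ∈ T <;> simp [hhdef, hx, hf₀pos x, mul_nonneg hε0.le (abs_nonneg _)]
  have hhmem : MemLp h (ENNReal.ofReal p) μ := by
    have hg : MemLp (fun x => ε * |φ x| + |f₀ x|) (ENNReal.ofReal p) μ := by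
      exact ((hφmem.abs).const_mul ε).add hf₀mem.abs
    refine MemLp.of_le hg hhmeas.aestronglyMeasurable (ae_of_all _ fun x => ?_)
    have h1 : 0 ≤ ε * |φ x| + |f₀ x| := by positivity
    rw [Real.norm_eq_abs, Real.norm_eq_abs, abs_of_nonneg (hhpos x), abs_of_nonneg h1]
    by_cases hx : x ∈ T
    · simp only [hhdef, hx, if_true]
      exact le_add_of_nonneg_right (abs_nonneg _)
    · simp only [hhdef, hx, if_false]
      exact (le_abs_self _).trans (le_add_of_nonneg_left (by positivity))
  have hhadm : IsAdmissible μ ν π p Set.univ h := by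
    refine ⟨hhmeas, hhpos, hhmem, ?_⟩
    filter_upwards [hf₀adm] with l hl _
    have haeπ : ∀ᵐ x ∂ν l, π x = l := by
      rw [MeasureTheory.ae_iff]; exact hK l
    by_cases hlS : l ∈ S
    · have : ∫⁻ x, ENNReal.ofReal (h x) ∂ν l = ∫⁻ x, ENNReal.ofReal ε * Φ x ∂ν l := by
        refine lintegral_congr_ae ?_
        filter_upwards [haeπ] with x hx
        have hxT : x ∈ T := by simp [hTdef, hx, hlS]
        simp [hhdef, hxT, hΦdef, ENNReal.ofReal_mul hε0.le]
      rw [this, lintegral_const_mul _ hΦmeas]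
      have hlS' : ∫⁻ x, Φ x ∂ν l = ⊤ := hlS
      rw [hlS', ENNReal.mul_top (by simp [ENNReal.ofReal_eq_zero, not_le, hε0])]
      exact le_top
    · have : ∫⁻ x, ENNReal.ofReal (h x) ∂ν l = ∫⁻ x, ENNReal.ofReal (f₀ x) ∂ν l := by
        refine lintegral_congr_ae ?_
        filter_upwards [haeπ] with x hx
        have hxT : x ∉ T := by simp [hTdef, hx, hlS]
        simp [hhdef, hxT]
      rw [this]
      exact hl (Set.mem_univ l)
  -- compare norms
  have hIT : ∫⁻ x in T, (‖h x‖₊ : ℝ≥0∞) ^ p ∂μ = (r : ℝ≥0∞) * A := by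
    have : ∫⁻ x in T, (‖h x‖₊ : ℝ≥0∞) ^ p ∂μ
        = ∫⁻ x in T, ENNReal.ofReal ε ^ p * (‖φ x‖₊ : ℝ≥0∞) ^ p ∂μ := by
      refine setLIntegral_congr_fun hTmeas (fun x hx => ?_)
      rw [hhdef]
      simp only [hx, if_true]
      rw [nnnorm_mul, Real.nnnorm_abs, ENNReal.coe_mul,
        ENNReal.mul_rpow_of_nonneg _ _ hp0.le, show (‖ε‖₊ : ℝ≥0∞) = ENNReal.ofReal ε from Real.enorm_eq_ofReal hε0.le]
    rw [this, lintegral_const_mul _ hφpm, hεp]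
  have hITc : ∫⁻ x in Tᶜ, (‖h x‖₊ : ℝ≥0∞) ^ p ∂μ = ∫⁻ x in Tᶜ, (‖f₀ x‖₊ : ℝ≥0∞) ^ p ∂μ := by
    refine setLIntegral_congr_fun hTmeas.compl (fun x hx => ?_)
    simp [hhdef, (by simpa using hx : x ∉ T)]
  have hBlt : ∫⁻ x in Tᶜ, (‖f₀ x‖₊ : ℝ≥0∞) ^ p ∂μ ≠ ⊤ :=
    (lt_of_le_of_lt (setLIntegral_le_lintegral _ _) hIf₀).ne
  have hIh : I h < I f₀ := by
    rw [hIdef]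
    simp only
    rw [← lintegral_add_compl (fun x => (‖h x‖₊ : ℝ≥0∞) ^ p) hTmeas,
      ← lintegral_add_compl (fun x => (‖f₀ x‖₊ : ℝ≥0∞) ^ p) hTmeas,
      hIT, hITc]
    exact ENNReal.add_lt_add_right hBlt hrA
  have hlt : eLpNorm h (ENNReal.ofReal p) μ < eLpNorm f₀ (ENNReal.ofReal p) μ := by
    rw [heLp h, heLp f₀]
    exact ENNReal.rpow_lt_rpow hIh (by positivity)
  have hmod : pModulus μ ν π p Set.univ ≤ eLpNorm h (ENNReal.ofReal p) μ :=
    iInf₂_le h hhadm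
  rw [hf₀ext] at hlt
  exact absurd (lt_of_le_of_lt hmod hlt) (lt_irrefl _)
end

section
/- Let u := 1/w (the abstract Jacobian). If f₀ is an extremal function for the p-modulus mod_p(F), then for μ-almost every x ∈ X the leaf integral ∫_X u^{1/(p-1)} dν_{π(x)} is finite and positive, and f₀(x) = u(x)^{1/(p-1)} / ∫_X u^{1/(p-1)} dν_{π(x)}. -/
open MeasureTheory ENNReal



lemma bern_le {p t : ℝ} (hp : 1 < p) (ht : 0 ≤ t) : p * t ≤ t ^ p + (p - 1) := by
  have h := one_add_mul_self_le_rpow_one_add (by linarith : (-1:ℝ) ≤ t - 1) hp.le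
  have e : (1 : ℝ) + (t - 1) = t := by ring
  rw [e] at h; nlinarith [h]

lemma bern_eq {p t : ℝ} (hp : 1 < p) (ht : 0 ≤ t) (h : t ^ p + (p - 1) = p * t) : t = 1 := by
  by_contra hne
  have h2 := one_add_mul_self_lt_rpow_one_add (by linarith : (-1:ℝ) ≤ t - 1)
    (by intro h3; apply hne; linarith) hp
  have e : (1 : ℝ) + (t - 1) = t := by ring
  rw [e] at h2; nlinarith [h2]

lemma tangent_le {p r s : ℝ} (hp : 1 < p) (hr : 0 ≤ r) (hs : 0 < s) :
    p * s ^ (p - 1) * r ≤ r ^ p + (p - 1) * s ^ p := by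
  have ht : 0 ≤ r / s := by positivity
  have h := bern_le hp ht
  have hdiv : (r / s) ^ p = r ^ p / s ^ p := Real.div_rpow hr hs.le p
  rw [hdiv] at h
  have hsp : 0 < s ^ p := Real.rpow_pos_of_pos hs p
  have hsp1 : s ^ (p - 1) * s = s ^ p := by
    rw [← Real.rpow_add_one hs.ne' (p-1)]; norm_num
  have hkey : p * (r / s) * s ^ p ≤ (r ^ p / s ^ p + (p - 1)) * s ^ p := by nlinarith
  have e1 : p * (r / s) * s ^ p = p * s ^ (p - 1) * r := by
    field_simp; rw [← hsp1]; ring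
  have e2 : (r ^ p / s ^ p + (p - 1)) * s ^ p = r ^ p + (p - 1) * s ^ p := by
    field_simp
  rw [e1, e2] at hkey; exact hkey

lemma tangent_eq {p r s : ℝ} (hp : 1 < p) (hr : 0 ≤ r) (hs : 0 < s)
    (h : r ^ p + (p - 1) * s ^ p = p * s ^ (p - 1) * r) : r = s := by
  have ht : 0 ≤ r / s := by positivity
  have hdiv : (r / s) ^ p = r ^ p / s ^ p := Real.div_rpow hr hs.le p
  have hsp : 0 < s ^ p := Real.rpow_pos_of_pos hs p
  have hsp1 : s ^ (p - 1) * s = s ^ p := by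
    rw [← Real.rpow_add_one hs.ne' (p-1)]; norm_num
  have key : (r/s) ^ p + (p - 1) = p * (r/s) := by
    rw [hdiv]
    have e1 : p * (r / s) * s ^ p = p * s ^ (p - 1) * r := by
      field_simp; rw [← hsp1]; ring
    have e2 : (r ^ p / s ^ p + (p - 1)) * s ^ p = r ^ p + (p - 1) * s ^ p := by
      field_simp
    apply mul_right_cancel₀ hsp.ne'
    rw [e1, e2, h]
  have h1 := bern_eq hp ht key
  have : r = s * 1 := by rw [← h1]; field_simp
  simpa using this

lemma enn_repr {a : ℝ≥0∞} (ha : a ≠ ∞) : a = ENNReal.ofReal a.toReal := (ENNReal.ofReal_toReal ha).symm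

lemma enn_tangent_le {p : ℝ} (hp : 1 < p) {a c : ℝ≥0∞} (ha : a ≠ ∞) (hc0 : c ≠ 0) (hc : c ≠ ∞) :
    ENNReal.ofReal p * c ^ (p - 1) * a ≤ a ^ p + ENNReal.ofReal (p - 1) * c ^ p := by
  set r := a.toReal with hr
  set s := c.toReal with hs
  have hr0 : 0 ≤ r := ENNReal.toReal_nonneg
  have hs0 : 0 < s := ENNReal.toReal_pos hc0 hc
  have hae : a = ENNReal.ofReal r := enn_repr ha
  have hce : c = ENNReal.ofReal s := enn_repr hc
  have hsp1 : 0 < s ^ (p - 1) := Real.rpow_pos_of_pos hs0 _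
  have hsp : 0 < s ^ p := Real.rpow_pos_of_pos hs0 _
  have hrp : 0 ≤ r ^ p := Real.rpow_nonneg hr0 _
  have hp0 : (0:ℝ) ≤ p := by linarith
  have hp1 : (0:ℝ) ≤ p - 1 := by linarith
  rw [hae, hce]
  rw [ENNReal.ofReal_rpow_of_pos hs0, ENNReal.ofReal_rpow_of_pos hs0,
    ENNReal.ofReal_rpow_of_nonneg hr0 hp0]
  rw [← ENNReal.ofReal_mul hp1, ← ENNReal.ofReal_mul hp0,
    ← ENNReal.ofReal_mul (show (0:ℝ) ≤ p * s ^ (p-1) by nlinarith),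
    ← ENNReal.ofReal_add hrp (by nlinarith)]
  exact ENNReal.ofReal_le_ofReal (tangent_le hp hr0 hs0)

lemma enn_tangent_eq {p : ℝ} (hp : 1 < p) {a c : ℝ≥0∞} (ha : a ≠ ∞) (hc0 : c ≠ 0) (hc : c ≠ ∞)
    (h : a ^ p + ENNReal.ofReal (p - 1) * c ^ p = ENNReal.ofReal p * c ^ (p - 1) * a) : a = c := by
  set r := a.toReal with hr
  set s := c.toReal with hs
  have hr0 : 0 ≤ r := ENNReal.toReal_nonneg
  have hs0 : 0 < s := ENNReal.toReal_pos hc0 hc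
  have hae : a = ENNReal.ofReal r := enn_repr ha
  have hce : c = ENNReal.ofReal s := enn_repr hc
  have hsp1 : 0 < s ^ (p - 1) := Real.rpow_pos_of_pos hs0 _
  have hsp : 0 < s ^ p := Real.rpow_pos_of_pos hs0 _
  have hrp : 0 ≤ r ^ p := Real.rpow_nonneg hr0 _
  have hp0 : (0:ℝ) ≤ p := by linarith
  have hp1 : (0:ℝ) ≤ p - 1 := by linarith
  rw [hae, hce] at h
  rw [ENNReal.ofReal_rpow_of_pos hs0, ENNReal.ofReal_rpow_of_pos hs0,
    ENNReal.ofReal_rpow_of_nonneg hr0 hp0] at h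
  rw [← ENNReal.ofReal_mul hp1, ← ENNReal.ofReal_mul hp0,
    ← ENNReal.ofReal_mul (show (0:ℝ) ≤ p * s ^ (p-1) by nlinarith),
    ← ENNReal.ofReal_add hrp (by nlinarith)] at h
  rw [ENNReal.ofReal_eq_ofReal_iff (add_nonneg hrp (mul_nonneg hp1 hsp.le))
    (mul_nonneg (mul_nonneg hp0 hsp1.le) hr0)] at h
  have := tangent_eq hp hr0 hs0 h
  rw [hae, hce, this]

lemma ae_eq_of_le_lint {α : Type*} [MeasurableSpace α] {m : Measure α} {g₁ g₂ : α → ℝ≥0∞}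
    (h₁ : Measurable g₁) (h₂ : Measurable g₂) (hle : ∀ᵐ x ∂m, g₂ x ≤ g₁ x)
    (hfin : ∫⁻ x, g₂ x ∂m ≠ ∞) (hint : ∫⁻ x, g₁ x ∂m ≤ ∫⁻ x, g₂ x ∂m) :
    g₁ =ᵐ[m] g₂ := by
  have hsub : ∫⁻ x, (g₁ x - g₂ x) ∂m = ∫⁻ x, g₁ x ∂m - ∫⁻ x, g₂ x ∂m :=
    lintegral_sub h₂ hfin hle
  have h0 : ∫⁻ x, (g₁ x - g₂ x) ∂m = 0 := by rw [hsub]; exact tsub_eq_zero_of_le hint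
  have := (lintegral_eq_zero_iff (h₁.sub h₂)).1 h0
  filter_upwards [this, hle] with x hx hx2
  exact le_antisymm (tsub_eq_zero_iff_le.1 hx) hx2

lemma leaf_key {X : Type*} [MeasurableSpace X] (m : Measure X) {p : ℝ} (hp : 1 < p)
    {F U W : X → ℝ≥0∞} (hFm : Measurable F) (hUm : Measurable U) (hWm : Measurable W)
    (hFfin : ∀ x, F x ≠ ∞) (hU0 : ∀ x, U x ≠ 0) (hUfin : ∀ x, U x ≠ ∞)
    (hW0 : ∀ x, W x ≠ 0) (hWfin : ∀ x, W x ≠ ∞)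
    (hUW : ∀ x, U x ^ (p - 1) * W x = 1)
    (hconstr : 1 ≤ ∫⁻ x, F x ∂m)
    (hJ0 : ∫⁻ x, U x ∂m ≠ 0) (hJfin : ∫⁻ x, U x ∂m ≠ ∞) :
    (∫⁻ x, U x ∂m) ^ (1 - p) ≤ ∫⁻ x, F x ^ p * W x ∂m ∧
      ((∫⁻ x, F x ^ p * W x ∂m) ≤ (∫⁻ x, U x ∂m) ^ (1 - p) →
        ∀ᵐ x ∂m, F x = U x / ∫⁻ y, U y ∂m) := by
  set J := ∫⁻ x, U x ∂m with hJ
  set K := J⁻¹ with hKdef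
  have hK0 : K ≠ 0 := ENNReal.inv_ne_zero.2 hJfin
  have hKfin : K ≠ ∞ := ENNReal.inv_ne_top.2 hJ0
  have hp1 : (0:ℝ) < p - 1 := by linarith
  set c : X → ℝ≥0∞ := fun x => U x * K with hcdef
  have hc0 : ∀ x, c x ≠ 0 := fun x => mul_ne_zero (hU0 x) hK0
  have hcfin : ∀ x, c x ≠ ∞ := fun x => ENNReal.mul_ne_top (hUfin x) hKfin
  -- pointwise identities
  have hcp1W : ∀ x, c x ^ (p - 1) * W x = K ^ (p - 1) := by
    intro x
    rw [hcdef]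
    rw [ENNReal.mul_rpow_of_ne_top (hUfin x) hKfin]
    calc U x ^ (p-1) * K ^ (p-1) * W x = K ^ (p-1) * (U x ^ (p-1) * W x) := by ring
    _ = K ^ (p-1) := by rw [hUW x, mul_one]
  have hcpW : ∀ x, c x ^ p * W x = K ^ (p - 1) * (K * U x) := by
    intro x
    have e : c x ^ p = c x ^ (p - 1) * c x := by
      rw [show p = (p-1)+1 by ring, ENNReal.rpow_add _ _ (hc0 x) (hcfin x), ENNReal.rpow_one]
      ring_nf
    calc c x ^ p * W x = (c x ^ (p-1) * W x) * c x := by rw [e]; ring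
    _ = K ^ (p-1) * (U x * K) := by rw [hcp1W x, hcdef]
    _ = K ^ (p-1) * (K * U x) := by ring
  have hJ1p : J ^ (1 - p) = K ^ (p - 1) := by
    rw [hKdef, ENNReal.inv_rpow, ← ENNReal.rpow_neg]
    norm_num
  have hKp0 : K ^ (p - 1) ≠ 0 := (ENNReal.rpow_pos (pos_iff_ne_zero.2 hK0) hKfin).ne'
  have hKpfin : K ^ (p - 1) ≠ ∞ := ENNReal.rpow_ne_top_of_nonneg hp1.le hKfin
  -- L and R
  set L : X → ℝ≥0∞ := fun x => F x ^ p * W x + ENNReal.ofReal (p - 1) * (c x ^ p * W x) with hLdef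
  set R : X → ℝ≥0∞ := fun x => ENNReal.ofReal p * (c x ^ (p - 1) * W x) * F x with hRdef
  have hcm : Measurable c := hUm.mul_const K
  have hcpm : Measurable fun x => c x ^ p := ENNReal.continuous_rpow_const.measurable.comp hcm
  have hcp1m : Measurable fun x => c x ^ (p-1) := ENNReal.continuous_rpow_const.measurable.comp hcm
  have hFpm : Measurable fun x => F x ^ p := ENNReal.continuous_rpow_const.measurable.comp hFm
  have hLm : Measurable L := ((hFpm.mul hWm).add ((hcpm.mul hWm).const_mul _))
  have hRm : Measurable R := ((hcp1m.mul hWm).const_mul _).mul hFm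
  have hRL : ∀ x, R x ≤ L x := by
    intro x
    have h := enn_tangent_le hp (hFfin x) (hc0 x) (hcfin x)
    calc R x = (ENNReal.ofReal p * c x ^ (p-1) * F x) * W x := by rw [hRdef]; ring
    _ ≤ (F x ^ p + ENNReal.ofReal (p - 1) * c x ^ p) * W x := mul_le_mul_left h _
    _ = L x := by rw [hLdef]; ring
  -- integrals
  have hintR : ∫⁻ x, R x ∂m = ENNReal.ofReal p * K ^ (p - 1) * ∫⁻ x, F x ∂m := by
    have : ∀ x, R x = (ENNReal.ofReal p * K ^ (p-1)) * F x := by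
      intro x; simp only [hRdef]; rw [hcp1W x]
    rw [lintegral_congr this, lintegral_const_mul _ hFm]
  have hintcpW : ∫⁻ x, c x ^ p * W x ∂m = K ^ (p - 1) := by
    have : ∀ x, c x ^ p * W x = (K ^ (p-1) * K) * U x := by
      intro x; rw [hcpW x]; ring
    rw [lintegral_congr this, lintegral_const_mul _ hUm, ← hJ]
    rw [mul_assoc, ENNReal.inv_mul_cancel hJ0 hJfin, mul_one]
  have hintL : ∫⁻ x, L x ∂m
      = (∫⁻ x, F x ^ p * W x ∂m) + ENNReal.ofReal (p - 1) * K ^ (p - 1) := by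
    rw [hLdef]
    rw [lintegral_add_left (f := fun x => F x ^ p * W x) (hFpm.mul hWm)]
    rw [lintegral_const_mul (f := fun x => c x ^ p * W x) _ (hcpm.mul hWm), hintcpW]
  have hofp : ENNReal.ofReal p = 1 + ENNReal.ofReal (p - 1) := by
    rw [← ENNReal.ofReal_one, ← ENNReal.ofReal_add zero_le_one (by linarith)]
    norm_num
  have hRfin : ENNReal.ofReal (p-1) * K ^ (p-1) ≠ ∞ := ENNReal.mul_ne_top ofReal_ne_top hKpfin
  -- part (a)
  have hLRint : ∫⁻ x, R x ∂m ≤ ∫⁻ x, L x ∂m := lintegral_mono hRL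
  have ha : J ^ (1 - p) ≤ ∫⁻ x, F x ^ p * W x ∂m := by
    rw [hJ1p]
    have h1 : ENNReal.ofReal p * K ^ (p - 1) * 1 ≤ ∫⁻ x, R x ∂m := by
      rw [hintR]; exact mul_le_mul_right hconstr _
    rw [mul_one] at h1
    have h2 := h1.trans hLRint
    rw [hintL, hofp, add_mul, one_mul] at h2
    exact (ENNReal.add_le_add_iff_right hRfin).1 h2
  refine ⟨ha, fun hb => ?_⟩
  rw [hJ1p] at hb
  have hAeq : ∫⁻ x, F x ^ p * W x ∂m = K ^ (p - 1) := le_antisymm hb (hJ1p ▸ ha)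
  have hintLval : ∫⁻ x, L x ∂m = ENNReal.ofReal p * K ^ (p - 1) := by
    rw [hintL, hAeq, hofp, add_mul, one_mul]
  have hLRint2 : ∫⁻ x, L x ∂m ≤ ∫⁻ x, R x ∂m := by
    rw [hintLval, hintR]
    calc ENNReal.ofReal p * K ^ (p-1) = ENNReal.ofReal p * K ^ (p-1) * 1 := (mul_one _).symm
    _ ≤ ENNReal.ofReal p * K ^ (p-1) * ∫⁻ x, F x ∂m := mul_le_mul_right hconstr _
  have hRintfin : ∫⁻ x, R x ∂m ≠ ∞ := by
    intro htop
    rw [htop] at hLRint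
    have := top_le_iff.1 hLRint
    rw [hintLval] at this
    exact (ENNReal.mul_ne_top ofReal_ne_top hKpfin) this
  have haeLR : L =ᵐ[m] R := ae_eq_of_le_lint hLm hRm (Filter.Eventually.of_forall hRL) hRintfin hLRint2
  filter_upwards [haeLR] with x hx
  have hWinv : W x * (W x)⁻¹ = 1 := ENNReal.mul_inv_cancel (hW0 x) (hWfin x)
  have hx2 : (F x ^ p + ENNReal.ofReal (p - 1) * c x ^ p) * (W x * (W x)⁻¹)
      = (ENNReal.ofReal p * c x ^ (p - 1) * F x) * (W x * (W x)⁻¹) := by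
    have e1 : L x = (F x ^ p + ENNReal.ofReal (p - 1) * c x ^ p) * W x := by rw [hLdef]; ring
    have e2 : R x = (ENNReal.ofReal p * c x ^ (p - 1) * F x) * W x := by rw [hRdef]; ring
    calc (F x ^ p + ENNReal.ofReal (p - 1) * c x ^ p) * (W x * (W x)⁻¹)
        = L x * (W x)⁻¹ := by rw [e1]; ring
    _ = R x * (W x)⁻¹ := by rw [hx]
    _ = (ENNReal.ofReal p * c x ^ (p - 1) * F x) * (W x * (W x)⁻¹) := by rw [e2]; ring
  rw [hWinv, mul_one, mul_one] at hx2
  have := enn_tangent_eq hp (hFfin x) (hc0 x) (hcfin x) hx2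
  rw [this]
  show U x * K = U x / J
  rw [hKdef, div_eq_mul_inv]


set_option maxHeartbeats 2000000 in
/-- with u := 1/w the abstract Jacobian, an extremal function f₀ for the
p-modulus is given μ-a.e. by u^{1/(p-1)} divided by its leaf integral (which is finite
and positive for μ-a.e. point). -/
theorem statement7 {X Λ : Type*} [MeasurableSpace X] [MeasurableSpace Λ]
    (μ : MeasureTheory.Measure X) [SigmaFinite μ] (ν : Λ → MeasureTheory.Measure X)
    (π : X → Λ) (hπ : Measurable π) (hν : Measurable ν)
    (hK : ∀ l : Λ, ν l {x | π x ≠ l} = 0)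
    -- the abstract coarea formula
    (σ : MeasureTheory.Measure Λ) [SigmaFinite σ]
    (c₁ c₂ : ℝ) (hc₁ : 0 < c₁) (hc₁₂ : c₁ ≤ c₂)
    (w : X → ℝ) (hw : Measurable w) (hw₁ : ∀ x, c₁ ≤ w x) (hw₂ : ∀ x, w x ≤ c₂)
    (hcoarea : ∀ h : X → ℝ≥0∞, Measurable h →
      ∫⁻ x, h x ∂μ = ∫⁻ l, (∫⁻ x, h x * ENNReal.ofReal (w x) ∂(ν l)) ∂σ)
    (p : ℝ) (hp : 1 < p)
    (u : X → ℝ) (hu : u = fun x => 1 / w x)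
    (f₀ : X → ℝ) (hf₀ : IsExtremal μ ν π p f₀) :
    ∀ᵐ x ∂μ,
      0 < ∫⁻ y, ENNReal.ofReal (u y ^ (1 / (p - 1))) ∂(ν (π x)) ∧
      (∫⁻ y, ENNReal.ofReal (u y ^ (1 / (p - 1))) ∂(ν (π x))) < ⊤ ∧
      f₀ x = u x ^ (1 / (p - 1)) /
        (∫⁻ y, ENNReal.ofReal (u y ^ (1 / (p - 1))) ∂(ν (π x))).toReal := by
  obtain ⟨⟨hf₀m, hf₀nn, hf₀Lp, hf₀adm⟩, hext⟩ := hf₀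
  have hp1 : (0:ℝ) < p - 1 := by linarith
  have hp0 : (0:ℝ) < p := by linarith
  set q : ℝ := 1 / (p - 1) with hqdef
  have hq0 : 0 < q := by positivity
  have hw0 : ∀ x, 0 < w x := fun x => lt_of_lt_of_le hc₁ (hw₁ x)
  have hc₂ : 0 < c₂ := lt_of_lt_of_le hc₁ hc₁₂
  have hu0 : ∀ x, 0 < u x := fun x => by simp only [hu]; exact one_div_pos.2 (hw0 x)
  have hum : Measurable u := by rw [hu]; exact measurable_const.div hw
  set U : X → ℝ≥0∞ := fun x => ENNReal.ofReal (u x ^ q) with hUdef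
  set W : X → ℝ≥0∞ := fun x => ENNReal.ofReal (w x) with hWdef
  have hUm : Measurable U := ((Real.continuous_rpow_const hq0.le).measurable.comp hum).ennreal_ofReal
  have hWm : Measurable W := hw.ennreal_ofReal
  have hW0 : ∀ x, W x ≠ 0 := fun x => (ENNReal.ofReal_pos.2 (hw0 x)).ne'
  have hWfin : ∀ x, W x ≠ ⊤ := fun x => ENNReal.ofReal_ne_top
  have hU0 : ∀ x, U x ≠ 0 := fun x => (ENNReal.ofReal_pos.2 (Real.rpow_pos_of_pos (hu0 x) q)).ne'
  have hUfin : ∀ x, U x ≠ ⊤ := fun x => ENNReal.ofReal_ne_top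
  have huw : ∀ x, u x * w x = 1 := fun x => by simp only [hu]; exact one_div_mul_cancel (hw0 x).ne'
  have hUW : ∀ x, U x ^ (p - 1) * W x = 1 := by
    intro x
    simp only [hUdef, hWdef]
    rw [ENNReal.ofReal_rpow_of_pos (Real.rpow_pos_of_pos (hu0 x) q)]
    rw [← ENNReal.ofReal_mul (Real.rpow_nonneg (Real.rpow_nonneg (hu0 x).le q) (p-1))]
    have e : (u x ^ q) ^ (p - 1) = u x := by
      rw [← Real.rpow_mul (hu0 x).le]
      rw [show q * (p - 1) = 1 by rw [hqdef]; field_simp]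
      exact Real.rpow_one _
    rw [e, huw x, ENNReal.ofReal_one]
  have hUpW : ∀ x, U x ^ p * W x = U x := by
    intro x
    have e : U x ^ p = U x ^ (p - 1) * U x := by
      rw [show p = (p-1)+1 by ring, ENNReal.rpow_add _ _ (hU0 x) (hUfin x), ENNReal.rpow_one]
      ring_nf
    calc U x ^ p * W x = (U x ^ (p-1) * W x) * U x := by rw [e]; ring
    _ = U x := by rw [hUW x, one_mul]
  set J : Λ → ℝ≥0∞ := fun l => ∫⁻ x, U x ∂ν l with hJdef
  have hJm : Measurable J := (MeasureTheory.Measure.measurable_lintegral hUm).comp hν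
  set F : X → ℝ≥0∞ := fun x => ENNReal.ofReal (f₀ x) with hFdef
  have hFm : Measurable F := hf₀m.ennreal_ofReal
  have hFfin : ∀ x, F x ≠ ⊤ := fun x => ENNReal.ofReal_ne_top
  have hFpm : Measurable fun x => F x ^ p := ENNReal.continuous_rpow_const.measurable.comp hFm
  set A : Λ → ℝ≥0∞ := fun l => ∫⁻ x, F x ^ p * W x ∂ν l with hAdef
  have hAm : Measurable A := (MeasureTheory.Measure.measurable_lintegral (hFpm.mul hWm)).comp hν
  set B : Λ → ℝ≥0∞ := fun l => if J l = 0 then 0 else J l ^ (1 - p) with hBdef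
  have hBm : Measurable B := by
    apply Measurable.ite (hJm (measurableSet_singleton 0)) measurable_const
    exact ENNReal.continuous_rpow_const.measurable.comp hJm
  have hνz : ∀ l, J l = 0 → ν l = 0 := by
    intro l hl
    have hlow : ∀ x, ENNReal.ofReal ((1/c₂) ^ q) ≤ U x := by
      intro x
      apply ENNReal.ofReal_le_ofReal
      apply Real.rpow_le_rpow (by positivity) _ hq0.le
      rw [hu]
      exact one_div_le_one_div_of_le (hw0 x) (hw₂ x)
    have h1 : ENNReal.ofReal ((1/c₂) ^ q) * ν l Set.univ ≤ J l := by
      rw [← MeasureTheory.lintegral_const]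
      exact MeasureTheory.lintegral_mono hlow
    rw [hl, le_zero_iff] at h1
    rcases mul_eq_zero.1 h1 with h | h
    · exact absurd h (ENNReal.ofReal_pos.2 (by positivity)).ne'
    · exact MeasureTheory.Measure.measure_univ_eq_zero.1 h
  have hWint0 : ∀ l, (∫⁻ x, W x ∂ν l) = 0 → ν l = 0 := by
    intro l hl
    have h1 : ENNReal.ofReal c₁ * ν l Set.univ ≤ ∫⁻ x, W x ∂ν l := by
      rw [← MeasureTheory.lintegral_const]
      exact MeasureTheory.lintegral_mono fun x => ENNReal.ofReal_le_ofReal (hw₁ x)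
    rw [hl, le_zero_iff] at h1
    rcases mul_eq_zero.1 h1 with h | h
    · exact absurd h (ENNReal.ofReal_pos.2 hc₁).ne'
    · exact MeasureTheory.Measure.measure_univ_eq_zero.1 h
  have hWintm : Measurable fun l => ∫⁻ x, W x ∂ν l :=
    (MeasureTheory.Measure.measurable_lintegral hWm).comp hν
  have hKae : ∀ l, ∀ᵐ x ∂ν l, π x = l := by
    intro l
    rw [MeasureTheory.ae_iff]
    exact hK l
  have hmapeq : ∀ N : Set Λ, MeasurableSet N →
      μ.map π N = ∫⁻ l, N.indicator (fun l' => ∫⁻ x, W x ∂ν l') l ∂σ := by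
    intro N hN
    rw [MeasureTheory.Measure.map_apply hπ hN]
    have h1 : μ (π ⁻¹' N) = ∫⁻ x, (π ⁻¹' N).indicator (fun _ => (1:ℝ≥0∞)) x ∂μ := by
      rw [MeasureTheory.lintegral_indicator (hπ hN)]
      simp
    rw [h1, hcoarea ((π ⁻¹' N).indicator fun _ => (1:ℝ≥0∞))
      (measurable_const.indicator (hπ hN))]
    apply MeasureTheory.lintegral_congr
    intro l
    by_cases hl : l ∈ N
    · rw [Set.indicator_of_mem hl]
      apply MeasureTheory.lintegral_congr_ae
      filter_upwards [hKae l] with x hx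
      have : x ∈ π ⁻¹' N := by simp [hx, hl]
      rw [Set.indicator_of_mem this, one_mul]
    · rw [Set.indicator_of_notMem hl]
      rw [← MeasureTheory.lintegral_zero]
      apply MeasureTheory.lintegral_congr_ae
      filter_upwards [hKae l] with x hx
      have : x ∉ π ⁻¹' N := by simp [hx, hl]
      rw [Set.indicator_of_notMem this, zero_mul]
  have hσnull_of_mapnull : ∀ N : Set Λ, MeasurableSet N → μ.map π N = 0 →
      ∀ᵐ l ∂σ, l ∉ N ∨ ν l = 0 := by
    intro N hN h0
    rw [hmapeq N hN] at h0
    have := (MeasureTheory.lintegral_eq_zero_iff (hWintm.indicator hN)).1 h0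
    filter_upwards [this] with l hl
    by_cases hmem : l ∈ N
    · right
      rw [Set.indicator_of_mem hmem] at hl
      exact hWint0 l hl
    · exact Or.inl hmem
  have hmapnull_of : ∀ N : Set Λ, MeasurableSet N → (∀ᵐ l ∂σ, l ∉ N ∨ ν l = 0) →
      μ.map π N = 0 := by
    intro N hN hae
    rw [hmapeq N hN, ← MeasureTheory.lintegral_zero]
    apply MeasureTheory.lintegral_congr_ae
    filter_upwards [hae] with l hl
    rcases hl with hl | hl
    · rw [Set.indicator_of_notMem hl]
    · by_cases hmem : l ∈ N
      · rw [Set.indicator_of_mem hmem, hl]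
        simp
      · rw [Set.indicator_of_notMem hmem]
  -- Step I
  have hae1 : ∀ᵐ l ∂σ, 1 ≤ ∫⁻ x, F x ∂ν l ∨ ν l = 0 := by
    have hFintm : Measurable fun l => ∫⁻ x, F x ∂ν l :=
      (MeasureTheory.Measure.measurable_lintegral hFm).comp hν
    set N : Set Λ := {l | ¬ 1 ≤ ∫⁻ x, F x ∂ν l} with hNdef
    have hNmeas : MeasurableSet N := (measurableSet_le measurable_const hFintm).compl
    have hmap0 : μ.map π N = 0 := by
      rw [← MeasureTheory.ae_iff]
      simpa using hf₀adm
    filter_upwards [hσnull_of_mapnull N hNmeas hmap0] with l hl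
    rcases hl with hl | hl
    · left; simpa [hNdef] using hl
    · exact Or.inr hl
  -- Step II
  have hABae : ∀ᵐ l ∂σ, B l ≤ A l := by
    filter_upwards [hae1] with l hl
    rcases hl with hcon | hν0
    · by_cases hJ0 : J l = 0
      · simp [hBdef, hJ0]
      by_cases hJt : J l = ⊤
      · have : B l = 0 := by
          simp only [hBdef]
          rw [if_neg hJ0, hJt, ENNReal.top_rpow_of_neg (by linarith)]
        rw [this]; exact zero_le
      · have := (leaf_key (ν l) hp hFm hUm hWm hFfin hU0 hUfin hW0 hWfin hUW hcon hJ0 hJt).1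
        simp only [hBdef]
        rw [if_neg hJ0]
        exact this
    · have hJ0 : J l = 0 := by rw [hJdef]; simp [hν0]
      simp [hBdef, hJ0]
  -- eLpNorm formula
  have hsnorm_eq : ∀ f : X → ℝ, Measurable f → (∀ x, 0 ≤ f x) →
      eLpNorm f (ENNReal.ofReal p) μ = (∫⁻ x, ENNReal.ofReal (f x) ^ p ∂μ) ^ (1/p) := by
    intro f hf hnn
    rw [MeasureTheory.eLpNorm_eq_lintegral_rpow_enorm_toReal
      (by simp [ENNReal.ofReal_eq_zero]; linarith) ENNReal.ofReal_ne_top]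
    rw [ENNReal.toReal_ofReal hp0.le]
    congr 1
    apply MeasureTheory.lintegral_congr
    intro x
    rw [Real.enorm_eq_ofReal (hnn x)]
  have hpown : ∀ z : ℝ≥0∞, (z ^ (1/p)) ^ p = z := by
    intro z
    rw [← ENNReal.rpow_mul]
    rw [one_div, inv_mul_cancel₀ hp0.ne', ENNReal.rpow_one]
  have hM : ∫⁻ x, F x ^ p ∂μ = ∫⁻ l, A l ∂σ := hcoarea _ hFpm
  have hMfin : ∫⁻ x, F x ^ p ∂μ ≠ ⊤ := by
    intro htop
    have h1 := hf₀Lp.2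
    rw [hsnorm_eq f₀ hf₀m hf₀nn] at h1
    rw [hFdef] at htop
    rw [htop, ENNReal.top_rpow_of_pos (by positivity)] at h1
    exact (lt_irrefl _) h1
  -- Step IV: upper bound
  have hup : ∫⁻ x, F x ^ p ∂μ ≤ ∫⁻ l, B l ∂σ := by
    have hPM : ∫⁻ x, F x ^ p ∂μ = (pModulus μ ν π p Set.univ) ^ p := by
      rw [← hext, hsnorm_eq f₀ hf₀m hf₀nn, hpown]
    rw [hPM]
    refine ENNReal.le_of_forall_pos_le_add fun ε hε hBtop => ?_
    classical
    set Xs := MeasureTheory.spanningSets μ with hXs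
    have hXsm : ∀ n, MeasurableSet (Xs n) := fun n =>
      MeasureTheory.measurableSet_spanningSets μ n
    set Jn : ℕ → Λ → ℝ≥0∞ := fun n l => ∫⁻ x, (Xs n).indicator U x ∂ν l with hJn
    have hJnm : ∀ n, Measurable (Jn n) := fun n =>
      (MeasureTheory.Measure.measurable_lintegral (hUm.indicator (hXsm n))).comp hν
    have hindmono : Monotone fun n => (Xs n).indicator U := fun i j hij x =>
      Set.indicator_le_indicator_of_subset (MeasureTheory.monotone_spanningSets μ hij)
        (fun _ => zero_le) x
    have hJnsup : ∀ l, (⨆ n, Jn n l) = J l := by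
      intro l
      simp only [hJn]
      rw [← MeasureTheory.lintegral_iSup (fun n => hUm.indicator (hXsm n)) hindmono]
      apply MeasureTheory.lintegral_congr
      intro x
      obtain ⟨n₀, hn₀⟩ := Set.mem_iUnion.1
        (by rw [MeasureTheory.iUnion_spanningSets μ]; exact Set.mem_univ x :
          x ∈ ⋃ n, Xs n)
      apply le_antisymm
      · exact iSup_le fun n => Set.indicator_le_self _ _ x
      · exact le_iSup_of_le n₀ (by rw [Set.indicator_of_mem hn₀])
    have hJnfin : ∀ᵐ l ∂σ, ∀ n, Jn n l ≠ ⊤ := by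
      rw [MeasureTheory.ae_all_iff]
      intro n
      set Cst := ENNReal.ofReal ((1/c₁) ^ q) * (ENNReal.ofReal c₁)⁻¹ with hCst
      have hCfin : Cst ≠ ⊤ := ENNReal.mul_ne_top ENNReal.ofReal_ne_top
        (ENNReal.inv_ne_top.2 (ENNReal.ofReal_pos.2 hc₁).ne')
      have hUb : ∀ x, U x ≤ Cst * W x := by
        intro x
        have h1 : U x ≤ ENNReal.ofReal ((1/c₁) ^ q) := by
          apply ENNReal.ofReal_le_ofReal
          apply Real.rpow_le_rpow (hu0 x).le _ hq0.le
          simp only [hu]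
          exact one_div_le_one_div_of_le hc₁ (hw₁ x)
        have h2 : ENNReal.ofReal ((1/c₁)^q) = Cst * ENNReal.ofReal c₁ := by
          rw [hCst, mul_assoc,
            ENNReal.inv_mul_cancel (ENNReal.ofReal_pos.2 hc₁).ne' ENNReal.ofReal_ne_top,
            mul_one]
        calc U x ≤ ENNReal.ofReal ((1/c₁)^q) := h1
        _ = Cst * ENNReal.ofReal c₁ := h2
        _ ≤ Cst * W x := mul_le_mul_right (ENNReal.ofReal_le_ofReal (hw₁ x)) _
      have e1 : μ (Xs n) =
          ∫⁻ l', ∫⁻ x, (Xs n).indicator (fun _ => (1:ℝ≥0∞)) x * W x ∂ν l' ∂σ := by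
        have h1 : μ (Xs n) = ∫⁻ x, (Xs n).indicator (fun _ => (1:ℝ≥0∞)) x ∂μ := by
          rw [MeasureTheory.lintegral_indicator (hXsm n)]
          simp
        rw [h1]
        exact hcoarea _ (measurable_const.indicator (hXsm n))
      have hint : ∫⁻ l', Jn n l' ∂σ ≤ Cst * μ (Xs n) := by
        have hmono1 : ∀ l', Jn n l' ≤
            ∫⁻ x, Cst * ((Xs n).indicator (fun _ => (1:ℝ≥0∞)) x * W x) ∂ν l' := by
          intro l'
          apply MeasureTheory.lintegral_mono
          intro x
          show (Xs n).indicator U x ≤ Cst * ((Xs n).indicator (fun _ => (1:ℝ≥0∞)) x * W x)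
          by_cases hxs : x ∈ Xs n
          · rw [Set.indicator_of_mem hxs, Set.indicator_of_mem hxs, one_mul]
            exact hUb x
          · rw [Set.indicator_of_notMem hxs, Set.indicator_of_notMem hxs]
            simp
        calc ∫⁻ l', Jn n l' ∂σ
            ≤ ∫⁻ l', ∫⁻ x, Cst * ((Xs n).indicator (fun _ => (1:ℝ≥0∞)) x * W x) ∂ν l' ∂σ :=
              MeasureTheory.lintegral_mono hmono1
        _ = ∫⁻ l', Cst * ∫⁻ x, (Xs n).indicator (fun _ => (1:ℝ≥0∞)) x * W x ∂ν l' ∂σ := by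
              apply MeasureTheory.lintegral_congr
              intro l'
              rw [MeasureTheory.lintegral_const_mul
                (f := fun x => (Xs n).indicator (fun _ => (1:ℝ≥0∞)) x * W x) _
                ((measurable_const.indicator (hXsm n)).mul hWm)]
        _ = Cst * ∫⁻ l', ∫⁻ x, (Xs n).indicator (fun _ => (1:ℝ≥0∞)) x * W x ∂ν l' ∂σ :=
              MeasureTheory.lintegral_const_mul _
                ((MeasureTheory.Measure.measurable_lintegral
                  ((measurable_const.indicator (hXsm n)).mul hWm)).comp hν)
        _ = Cst * μ (Xs n) := by rw [← e1]
      have hfin2 : ∫⁻ l', Jn n l' ∂σ ≠ ⊤ := by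
        intro htop
        rw [htop] at hint
        exact (ENNReal.mul_lt_top (lt_top_iff_ne_top.2 hCfin)
          (MeasureTheory.measure_spanningSets_lt_top μ n)).ne (top_le_iff.1 hint)
      exact (MeasureTheory.ae_lt_top (hJnm n) hfin2).mono fun l h => h.ne
    set Sinf : Set Λ := {l | J l = ⊤} with hSinf
    have hSinfm : MeasurableSet Sinf := hJm (measurableSet_singleton ⊤)
    set Ls := MeasureTheory.spanningSets σ with hLs
    set Sm : ℕ → Set Λ := fun m => Sinf ∩ disjointed Ls m with hSmdef
    have hSmm : ∀ m, MeasurableSet (Sm m) := fun m =>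
      hSinfm.inter (MeasurableSet.disjointed
        (fun i => MeasureTheory.measurableSet_spanningSets σ i) m)
    have hSmdisj : Pairwise (Function.onFun Disjoint Sm) := fun i j hij =>
      Disjoint.mono Set.inter_subset_right Set.inter_subset_right
        (disjoint_disjointed Ls hij)
    have hSmfin : ∀ m, σ (Sm m) ≠ ⊤ := fun m =>
      (lt_of_le_of_lt (MeasureTheory.measure_mono
        (Set.inter_subset_right.trans (disjointed_subset Ls m)))
        (MeasureTheory.measure_spanningSets_lt_top σ m)).ne
    have hSmU : (⋃ m, Sm m) = Sinf := by
      simp only [hSmdef]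
      rw [← Set.inter_iUnion, iUnion_disjointed, MeasureTheory.iUnion_spanningSets,
        Set.inter_univ]
    set em : ℕ → ℝ≥0∞ := fun m => (ε:ℝ≥0∞) * 2⁻¹ ^ (m+1) with hem
    have htwo0 : (2:ℝ≥0∞)⁻¹ ≠ 0 := ENNReal.inv_ne_zero.2 ENNReal.ofNat_ne_top
    have hem0 : ∀ m, em m ≠ 0 := fun m =>
      mul_ne_zero (ENNReal.coe_ne_zero.2 hε.ne') (pow_ne_zero _ htwo0)
    have hemfin : ∀ m, em m ≠ ⊤ := fun m =>
      ENNReal.mul_ne_top ENNReal.coe_ne_top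
        (ENNReal.pow_ne_top (ENNReal.inv_ne_top.2 two_ne_zero))
    have hemsum : ∑' m, em m = (ε:ℝ≥0∞) := by
      simp only [hem]
      rw [ENNReal.tsum_mul_left, ENNReal.tsum_geometric_add_one, ENNReal.one_sub_inv_two,
        ENNReal.mul_inv_cancel htwo0 (ENNReal.inv_ne_top.2 two_ne_zero), mul_one]
    set kv : ℕ → ℝ≥0∞ := fun m => max 1 ((σ (Sm m) / em m) ^ q) with hkv
    have hkv1 : ∀ m, 1 ≤ kv m := fun m => le_max_left _ _
    have hkvfin : ∀ m, kv m ≠ ⊤ := by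
      intro m
      simp only [hkv]
      apply (max_lt one_lt_top ?_).ne
      exact ENNReal.rpow_lt_top_of_nonneg hq0.le (ENNReal.div_lt_top (hSmfin m) (hem0 m)).ne
    have hanti : ∀ {x y : ℝ≥0∞}, x ≤ y → y ^ (1-p) ≤ x ^ (1-p) := by
      intro x y hxy
      rw [show (1:ℝ)-p = -(p-1) by ring, ENNReal.rpow_neg, ENNReal.rpow_neg]
      exact ENNReal.inv_le_inv.2 (ENNReal.rpow_le_rpow hxy hp1.le)
    have hkvcost : ∀ m, kv m ^ (1-p) * σ (Sm m) ≤ em m := by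
      intro m
      by_cases hσ0 : σ (Sm m) = 0
      · rw [hσ0, mul_zero]; exact zero_le
      · have h1 : (σ (Sm m) / em m) ^ q ≤ kv m := le_max_right _ _
        have h2 : kv m ^ (1-p) ≤ ((σ (Sm m) / em m) ^ q) ^ (1-p) := hanti h1
        have h3 : ((σ (Sm m) / em m) ^ q) ^ (1-p) = (σ (Sm m) / em m)⁻¹ := by
          rw [← ENNReal.rpow_mul,
            show q * (1-p) = -1 by rw [hqdef]; field_simp; ring, ENNReal.rpow_neg_one]
        rw [h3] at h2
        have h4 : (σ (Sm m) / em m)⁻¹ = em m / σ (Sm m) :=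
          ENNReal.inv_div (Or.inl (hemfin m)) (Or.inl (hem0 m))
        calc kv m ^ (1-p) * σ (Sm m) ≤ (σ (Sm m) / em m)⁻¹ * σ (Sm m) :=
              mul_le_mul_left h2 _
        _ = em m * ((σ (Sm m))⁻¹ * σ (Sm m)) := by rw [h4, div_eq_mul_inv, mul_assoc]
        _ = em m := by
              rw [ENNReal.inv_mul_cancel hσ0 (hSmfin m), mul_one]
    set k : Λ → ℝ≥0∞ := fun l => ∑' m, (Sm m).indicator (fun _ => kv m) l with hk
    have hkm : Measurable k :=
      Measurable.ennreal_tsum fun m => measurable_const.indicator (hSmm m)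
    have hkval : ∀ m, ∀ l ∈ Sm m, k l = kv m := by
      intro m l hl
      simp only [hk]
      rw [tsum_eq_single m ?_]
      · rw [Set.indicator_of_mem hl]
      · intro m' hm'
        rw [Set.indicator_of_notMem]
        intro hl'
        exact (Set.disjoint_left.1 (hSmdisj hm') hl') hl
    have hkS : ∀ l, J l = ⊤ → 1 ≤ k l ∧ k l ≠ ⊤ := by
      intro l hl
      have hmem : l ∈ ⋃ m, Sm m := by rw [hSmU]; exact hl
      obtain ⟨m, hm⟩ := Set.mem_iUnion.1 hmem
      rw [hkval m l hm]
      exact ⟨hkv1 m, hkvfin m⟩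
    have hex : ∀ l, ∃ n, J l ≠ ⊤ ∨ k l ≤ Jn n l := by
      intro l
      by_cases hJt : J l = ⊤
      · obtain ⟨h1, h2⟩ := hkS l hJt
        have hlt : k l < ⨆ n, Jn n l := by
          rw [hJnsup l, hJt]
          exact lt_top_iff_ne_top.2 h2
        obtain ⟨n, hn⟩ := lt_iSup_iff.1 hlt
        exact ⟨n, Or.inr hn.le⟩
      · exact ⟨0, Or.inl hJt⟩
    have hpmeas : ∀ n, MeasurableSet {l | J l ≠ ⊤ ∨ k l ≤ Jn n l} := by
      intro n
      have h2 : MeasurableSet ((fun l => k l - Jn n l) ⁻¹' {0}) :=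
        (hkm.sub (hJnm n)) (measurableSet_singleton 0)
      have e : {l | J l ≠ ⊤ ∨ k l ≤ Jn n l}
          = (J ⁻¹' {⊤})ᶜ ∪ (fun l => k l - Jn n l) ⁻¹' {0} := by
        ext l
        simp [tsub_eq_zero_iff_le]
      rw [e]
      exact ((hJm (measurableSet_singleton ⊤)).compl).union h2
    have hnfm : Measurable fun l => Nat.find (hex l) :=
      Measurable.find (f := fun n (_ : Λ) => n) (fun n => measurable_const) hpmeas hex
    set nf : Λ → ℕ := fun l => Nat.find (hex l) with hnf
    have hnfspec : ∀ l, J l ≠ ⊤ ∨ k l ≤ Jn (nf l) l := fun l => Nat.find_spec (hex l)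
    have hDm : Measurable fun l => Jn (nf l) l :=
      Measurable.find (f := Jn) hJnm hpmeas hex
    set Dfun : Λ → ℝ≥0∞ := fun l => Jn (nf l) l with hD
    set Num : X → ℝ≥0∞ := fun x => (Xs (nf (π x))).indicator U x with hNum
    have hNumm : Measurable Num := by
      have h1 : Measurable (fun z : X × ℕ => (Xs z.2).indicator U z.1) :=
        measurable_from_prod_countable_left fun n => hUm.indicator (hXsm n)
      exact h1.comp (measurable_id.prodMk (hnfm.comp hπ))
    set G : X → ℝ≥0∞ := {x | J (π x) = ⊤}.piecewise
      (fun x => Num x / Dfun (π x)) (fun x => U x / J (π x)) with hG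
    have hGsetm : MeasurableSet {x | J (π x) = ⊤} := (hJm.comp hπ) (measurableSet_singleton ⊤)
    have hGm : Measurable G :=
      Measurable.piecewise hGsetm (hNumm.div (hDm.comp hπ)) (hUm.div (hJm.comp hπ))
    set g : X → ℝ := fun x => (G x).toReal with hg
    have hgm : Measurable g := hGm.ennreal_toReal
    have hGpm : Measurable fun x => G x ^ p := ENNReal.continuous_rpow_const.measurable.comp hGm
    -- finite-J leaves
    have hleaf_fin : ∀ l, J l ≠ ⊤ → J l ≠ 0 →
        (∫⁻ x, ENNReal.ofReal (g x) ∂ν l = 1 ∧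
         ∫⁻ x, G x ^ p * W x ∂ν l = J l ^ (1-p)) := by
      intro l hJt hJ0
      have hGx : ∀ᵐ x ∂ν l, G x = U x / J l := by
        filter_upwards [hKae l] with x hx
        have hnotmem : x ∉ {x | J (π x) = ⊤} := by simp [hx, hJt]
        simp only [hG]
        rw [Set.piecewise_eq_of_notMem _ _ _ hnotmem, hx]
      constructor
      · have hcong : ∀ᵐ x ∂ν l, ENNReal.ofReal (g x) = U x / J l := by
          filter_upwards [hGx] with x hx
          simp only [hg]
          rw [ENNReal.ofReal_toReal (by rw [hx]; exact (ENNReal.div_lt_top (hUfin x) hJ0).ne)]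
          exact hx
        rw [MeasureTheory.lintegral_congr_ae hcong]
        simp only [div_eq_mul_inv]
        rw [MeasureTheory.lintegral_mul_const _ hUm]
        exact ENNReal.mul_inv_cancel hJ0 hJt
      · have hcong : ∀ᵐ x ∂ν l, G x ^ p * W x = U x * ((J l)^p)⁻¹ := by
          filter_upwards [hGx] with x hx
          rw [hx, ENNReal.div_rpow_of_nonneg _ _ hp0.le]
          calc U x ^ p / J l ^ p * W x = (U x ^ p * W x) * (J l ^ p)⁻¹ := by
                rw [div_eq_mul_inv]; ring
          _ = U x * (J l ^ p)⁻¹ := by rw [hUpW x]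
        rw [MeasureTheory.lintegral_congr_ae hcong,
          MeasureTheory.lintegral_mul_const _ hUm]
        rw [show J l ^ (1-p) = J l ^ (1:ℝ) * J l ^ (-p) from by
          rw [← ENNReal.rpow_add _ _ hJ0 hJt]; ring_nf]
        rw [ENNReal.rpow_one, ENNReal.rpow_neg]
    -- infinite-J leaves
    have hleaf_inf : ∀ l, J l = ⊤ → (∀ n, Jn n l ≠ ⊤) →
        (∫⁻ x, ENNReal.ofReal (g x) ∂ν l = 1 ∧
         ∫⁻ x, G x ^ p * W x ∂ν l = (Dfun l) ^ (1-p) ∧ k l ≤ Dfun l) := by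
      intro l hJt hall
      have hkd : k l ≤ Dfun l := by
        rcases hnfspec l with h | h
        · exact absurd hJt h
        · exact h
      have hd0 : Dfun l ≠ 0 := by
        intro h0
        have h1 := hkd
        rw [h0, le_zero_iff] at h1
        have h2 := (hkS l hJt).1
        rw [h1] at h2
        simp at h2
      have hdfin : Dfun l ≠ ⊤ := hall (nf l)
      have hGx : ∀ᵐ x ∂ν l, G x = (Xs (nf l)).indicator U x / Dfun l := by
        filter_upwards [hKae l] with x hx
        have hmem : x ∈ {x | J (π x) = ⊤} := by simp [hx, hJt]
        simp only [hG]
        rw [Set.piecewise_eq_of_mem _ _ _ hmem]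
        simp only [hNum]
        rw [hx]
      have hint1 : ∫⁻ x, (Xs (nf l)).indicator U x ∂ν l = Dfun l := rfl
      refine ⟨?_, ?_, hkd⟩
      · have hcong : ∀ᵐ x ∂ν l, ENNReal.ofReal (g x) = (Xs (nf l)).indicator U x / Dfun l := by
          filter_upwards [hGx] with x hx
          simp only [hg]
          rw [ENNReal.ofReal_toReal (by
            rw [hx]
            exact (ENNReal.div_lt_top (by
              intro htop
              exact (hUfin x) (by
                by_cases hxs : x ∈ Xs (nf l)
                · rw [Set.indicator_of_mem hxs] at htop; exact htop
                · rw [Set.indicator_of_notMem hxs] at htop; simp at htop)) hd0).ne)]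
          exact hx
        rw [MeasureTheory.lintegral_congr_ae hcong]
        simp only [div_eq_mul_inv]
        rw [MeasureTheory.lintegral_mul_const _ (hUm.indicator (hXsm _))]
        exact ENNReal.mul_inv_cancel hd0 hdfin
      · have hcong : ∀ᵐ x ∂ν l, G x ^ p * W x
            = (Xs (nf l)).indicator U x * ((Dfun l)^p)⁻¹ := by
          filter_upwards [hGx] with x hx
          rw [hx, ENNReal.div_rpow_of_nonneg _ _ hp0.le]
          have e : ((Xs (nf l)).indicator U x) ^ p * W x = (Xs (nf l)).indicator U x := by
            by_cases hxs : x ∈ Xs (nf l)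
            · rw [Set.indicator_of_mem hxs]
              exact hUpW x
            · rw [Set.indicator_of_notMem hxs, ENNReal.zero_rpow_of_pos hp0, zero_mul]
          calc ((Xs (nf l)).indicator U x) ^ p / (Dfun l) ^ p * W x
              = (((Xs (nf l)).indicator U x) ^ p * W x) * ((Dfun l) ^ p)⁻¹ := by
                rw [div_eq_mul_inv]; ring
          _ = (Xs (nf l)).indicator U x * ((Dfun l) ^ p)⁻¹ := by rw [e]
        rw [MeasureTheory.lintegral_congr_ae hcong,
          MeasureTheory.lintegral_mul_const _ (hUm.indicator (hXsm _))]
        rw [show (Dfun l) ^ (1-p) = (Dfun l) ^ (1:ℝ) * (Dfun l) ^ (-p) from by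
          rw [← ENNReal.rpow_add _ _ hd0 hdfin]; ring_nf]
        rw [ENNReal.rpow_one, ENNReal.rpow_neg]
    -- the cost bound
    have hGcost : ∫⁻ x, G x ^ p ∂μ ≤ ∫⁻ l, B l ∂σ + ε := by
      rw [hcoarea _ hGpm]
      set tail : Λ → ℝ≥0∞ := fun l => ∑' m, (Sm m).indicator (fun _ => kv m ^ (1-p)) l
        with htail
      have h1 : ∀ᵐ l ∂σ, (∫⁻ x, G x ^ p * W x ∂ν l) ≤ B l + tail l := by
        filter_upwards [hJnfin] with l hall
        by_cases hJt : J l = ⊤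
        · obtain ⟨_, hcost, hkd⟩ := hleaf_inf l hJt hall
          rw [hcost]
          have hmem : l ∈ ⋃ m, Sm m := by rw [hSmU]; exact hJt
          obtain ⟨m, hm⟩ := Set.mem_iUnion.1 hmem
          have e1 : Dfun l ^ (1-p) ≤ kv m ^ (1-p) := by
            apply hanti
            rw [← hkval m l hm]
            exact hkd
          have e2 : kv m ^ (1-p) ≤ tail l := by
            simp only [htail]
            refine le_trans ?_ (ENNReal.le_tsum m)
            rw [Set.indicator_of_mem hm]
          calc Dfun l ^ (1-p) ≤ tail l := e1.trans e2
          _ ≤ B l + tail l := le_add_self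
        · by_cases hJ0 : J l = 0
          · have hn0 := hνz l hJ0
            rw [hn0]
            simp
          · rw [(hleaf_fin l hJt hJ0).2]
            have hBl : B l = J l ^ (1-p) := by
              simp only [hBdef]; rw [if_neg hJ0]
            rw [← hBl]
            exact self_le_add_right _ _
      calc ∫⁻ l, (∫⁻ x, G x ^ p * W x ∂ν l) ∂σ
          ≤ ∫⁻ l, (B l + tail l) ∂σ := MeasureTheory.lintegral_mono_ae h1
      _ = ∫⁻ l, B l ∂σ + ∫⁻ l, tail l ∂σ := MeasureTheory.lintegral_add_left hBm _
      _ ≤ ∫⁻ l, B l ∂σ + ε := by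
          apply add_le_add_right
          have htv : ∫⁻ l, tail l ∂σ = ∑' m, kv m ^ (1-p) * σ (Sm m) := by
            simp only [htail]
            rw [MeasureTheory.lintegral_tsum
              (fun m => (measurable_const.indicator (hSmm m)).aemeasurable)]
            congr 1
            funext m
            rw [MeasureTheory.lintegral_indicator_const (hSmm m)]
          rw [htv]
          calc ∑' m, kv m ^ (1-p) * σ (Sm m) ≤ ∑' m, em m := ENNReal.tsum_le_tsum hkvcost
          _ = ε := hemsum
    -- admissibility of g
    have hadm : IsAdmissible μ ν π p Set.univ g := by
      refine ⟨hgm, fun x => ENNReal.toReal_nonneg, ?_, ?_⟩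
      · refine ⟨hgm.aestronglyMeasurable, ?_⟩
        rw [hsnorm_eq g hgm (fun x => ENNReal.toReal_nonneg)]
        apply ENNReal.rpow_lt_top_of_nonneg (by positivity)
        have hle1 : ∫⁻ x, ENNReal.ofReal (g x) ^ p ∂μ ≤ ∫⁻ x, G x ^ p ∂μ := by
          apply MeasureTheory.lintegral_mono
          intro x
          exact ENNReal.rpow_le_rpow ENNReal.ofReal_toReal_le hp0.le
        intro htop
        rw [htop, top_le_iff] at hle1
        have := hGcost
        rw [hle1, top_le_iff] at this
        exact (ENNReal.add_lt_top.2 ⟨hBtop, ENNReal.coe_lt_top⟩).ne this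
      · have hBadm : MeasurableSet {l | ¬ 1 ≤ ∫⁻ x, ENNReal.ofReal (g x) ∂ν l} :=
          (measurableSet_le measurable_const
            ((MeasureTheory.Measure.measurable_lintegral hgm.ennreal_ofReal).comp hν)).compl
        have hBad0 : μ.map π {l | ¬ 1 ≤ ∫⁻ x, ENNReal.ofReal (g x) ∂ν l} = 0 := by
          apply hmapnull_of _ hBadm
          filter_upwards [hJnfin] with l hall
          by_cases hJ0 : J l = 0
          · exact Or.inr (hνz l hJ0)
          · left
            simp only [Set.mem_setOf_eq, not_not]
            by_cases hJt : J l = ⊤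
            · exact le_of_eq (hleaf_inf l hJt hall).1.symm
            · exact le_of_eq (hleaf_fin l hJt hJ0).1.symm
        rw [MeasureTheory.ae_iff]
        convert hBad0 using 2
        ext l
        simp
    -- final chain
    have hmodle : pModulus μ ν π p Set.univ ≤ eLpNorm g (ENNReal.ofReal p) μ :=
      iInf₂_le g hadm
    calc (pModulus μ ν π p Set.univ) ^ p
        ≤ (eLpNorm g (ENNReal.ofReal p) μ) ^ p := ENNReal.rpow_le_rpow hmodle hp0.le
    _ = ∫⁻ x, ENNReal.ofReal (g x) ^ p ∂μ := by
        rw [hsnorm_eq g hgm (fun x => ENNReal.toReal_nonneg), hpown]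
    _ ≤ ∫⁻ x, G x ^ p ∂μ :=
        MeasureTheory.lintegral_mono fun x =>
          ENNReal.rpow_le_rpow ENNReal.ofReal_toReal_le hp0.le
    _ ≤ ∫⁻ l, B l ∂σ + ε := hGcost
  -- combine
  have hBA : ∫⁻ l, B l ∂σ ≤ ∫⁻ l, A l ∂σ := MeasureTheory.lintegral_mono_ae hABae
  have hBfin : ∫⁻ l, B l ∂σ ≠ ⊤ := by
    intro htop
    rw [htop, top_le_iff, ← hM] at hBA
    exact hMfin hBA
  have hAeqB : A =ᵐ[σ] B := by
    apply ae_eq_of_le_lint hAm hBm hABae hBfin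
    rw [← hM]
    exact hup
  -- final σ-a.e. dichotomy
  have hfinal : ∀ᵐ l ∂σ, ν l = 0 ∨
      (J l ≠ 0 ∧ J l ≠ ⊤ ∧ ∀ᵐ x ∂ν l, F x = U x / J l ∧ π x = l) := by
    filter_upwards [hae1, hAeqB] with l h1 h2
    rcases h1 with hcon | hν0
    · by_cases hJ0 : J l = 0
      · exact Or.inl (hνz l hJ0)
      by_cases hJt : J l = ⊤
      · exfalso
        have hB0 : B l = 0 := by
          simp only [hBdef]
          rw [if_neg hJ0, hJt, ENNReal.top_rpow_of_neg (by linarith)]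
        have hA0 : A l = 0 := by rw [h2, hB0]
        have hF0 : ∀ᵐ x ∂ν l, F x = 0 := by
          have := (MeasureTheory.lintegral_eq_zero_iff (hFpm.mul hWm)).1 hA0
          filter_upwards [this] with x hx
          rcases mul_eq_zero.1 hx with h | h
          · rcases (ENNReal.rpow_eq_zero_iff).1 h with ⟨h', _⟩ | ⟨h', _⟩
            · exact h'
            · exact absurd h' (hFfin x)
          · exact absurd h (hW0 x)
        have : (1:ℝ≥0∞) ≤ 0 := by
          calc (1:ℝ≥0∞) ≤ ∫⁻ x, F x ∂ν l := hcon
          _ = ∫⁻ x, (0:ℝ≥0∞) ∂ν l := MeasureTheory.lintegral_congr_ae hF0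
          _ = 0 := MeasureTheory.lintegral_zero
        simp at this
      · right
        refine ⟨hJ0, hJt, ?_⟩
        have hb : A l ≤ J l ^ (1 - p) := by
          rw [h2]; simp only [hBdef]; rw [if_neg hJ0]
        have := (leaf_key (ν l) hp hFm hUm hWm hFfin hU0 hUfin hW0 hWfin hUW hcon hJ0 hJt).2 hb
        filter_upwards [this, hKae l] with x hx1 hx2
        exact ⟨hx1, hx2⟩
    · exact Or.inl hν0
  -- final μ-a.e. statement
  have hqnn : ∀ x, 0 ≤ u x ^ q := fun x => Real.rpow_nonneg (hu0 x).le q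
  set Good : Set X := {x | 0 < J (π x) ∧ J (π x) < ⊤ ∧ f₀ x = u x ^ q / (J (π x)).toReal}
    with hGooddef
  have hGm1 : MeasurableSet {x | 0 < J (π x)} := by
    have e : {x | 0 < J (π x)} = (fun x => J (π x)) ⁻¹' ({0}ᶜ) := by
      ext x; simp [pos_iff_ne_zero]
    rw [e]; exact (hJm.comp hπ) (measurableSet_singleton 0).compl
  have hGm2 : MeasurableSet {x | J (π x) < ⊤} := by
    have e : {x | J (π x) < ⊤} = (fun x => J (π x)) ⁻¹' ({⊤}ᶜ) := by
      ext x; simp [lt_top_iff_ne_top]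
    rw [e]; exact (hJm.comp hπ) (measurableSet_singleton ⊤).compl
  have hGm3 : MeasurableSet {x | f₀ x = u x ^ q / (J (π x)).toReal} := by
    apply measurableSet_eq_fun hf₀m
    exact ((Real.continuous_rpow_const hq0.le).measurable.comp hum).div
      ((hJm.comp hπ).ennreal_toReal)
  have hGoodm : MeasurableSet Good := by
    have e : Good = {x | 0 < J (π x)} ∩ ({x | J (π x) < ⊤} ∩
        {x | f₀ x = u x ^ q / (J (π x)).toReal}) := by
      ext x
      simp only [hGooddef, Set.mem_setOf_eq, Set.mem_inter_iff]
    rw [e]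
    exact hGm1.inter (hGm2.inter hGm3)
  have hGoodc : μ Goodᶜ = 0 := by
    have h1 : μ Goodᶜ = ∫⁻ x, Goodᶜ.indicator (fun _ => (1:ℝ≥0∞)) x ∂μ := by
      rw [MeasureTheory.lintegral_indicator hGoodm.compl]
      simp
    rw [h1, hcoarea (Goodᶜ.indicator fun _ => (1:ℝ≥0∞)) (measurable_const.indicator hGoodm.compl)]
    rw [← MeasureTheory.lintegral_zero]
    apply MeasureTheory.lintegral_congr_ae
    filter_upwards [hfinal] with l hl
    rcases hl with hν0 | ⟨hJ0, hJt, hae⟩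
    · simp [hν0]
    · rw [← MeasureTheory.lintegral_zero]
      apply MeasureTheory.lintegral_congr_ae
      filter_upwards [hae] with x hx
      obtain ⟨hx1, hx2⟩ := hx
      have hxGood : x ∈ Good := by
        rw [hGooddef]
        refine ⟨?_, ?_, ?_⟩
        · rw [hx2]; exact pos_iff_ne_zero.2 hJ0
        · rw [hx2]; exact lt_top_iff_ne_top.2 hJt
        · have e1 : f₀ x = (F x).toReal := by rw [hFdef, ENNReal.toReal_ofReal (hf₀nn x)]
          rw [e1, hx1, hx2, ENNReal.toReal_div, hUdef, ENNReal.toReal_ofReal (hqnn x)]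
      rw [Set.indicator_of_notMem (by simp [hxGood]), zero_mul]
  have hGoodae : ∀ᵐ x ∂μ, x ∈ Good := by
    rw [MeasureTheory.ae_iff]
    convert hGoodc using 2
    rfl
  filter_upwards [hGoodae] with x hx
  obtain ⟨h1, h2, h3⟩ := hx
  exact ⟨h1, h2, h3⟩
end
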